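/- arXiv:math/0009079 — 5 statements merged into one kernel-verified Lean document; each statement's English description precedes it below -/
import Mathlib

section
/- Let μ be a singular cardinal of cofinality ω with ⟨μₙ : n < ω⟩ a strictly increasing sequence of regular cardinals with supremum μ. Let Q be the set of closed subsets of μ of cardinality μ, ordered by q₁ ≤ q₂ iff |q₁ \ q₂| < μ. Then the set of normal conditions is dense in Q, where q is normal if, letting ⟨mₙ⟩ enumerate {m : q ∩ [μₘ, μₘ₊₁) ≠ ∅} increasingly, the order type of q ∩ [μ_{mₙ}, μ_{mₙ+1}) equals μₙ + 1 for every n. -/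
open Cardinal Set

noncomputable section

/-- Cardinality of a set of ordinals. -/
def scard (s : Set Ordinal.{0}) : Cardinal.{1} := Cardinal.mk s

/-- The set of accumulation points of a set of ordinals `p`:
ordinals `α` such that `p ∩ α` is nonempty and unbounded in `α`. -/
def accSet (p : Set Ordinal.{0}) : Set Ordinal.{0} :=
  {α | (p ∩ Set.Iio α).Nonempty ∧ α = sSup (p ∩ Set.Iio α)}

/-- A set of ordinals is closed iff it contains all of its accumulation
points below its supremum. -/
def IsClosedCond (q : Set Ordinal.{0}) : Prop :=
  accSet q ∩ Set.Iio (sSup q) ⊆ q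

/-- Order type of a set of ordinals. -/
def otp (s : Set Ordinal.{0}) : Ordinal.{1} :=
  Ordinal.type ((· < ·) : s → s → Prop)

/-- Membership in the poset `P`: subsets of `μ` of cardinality `μ`. -/
def InP (μ : Cardinal.{0}) (p : Set Ordinal.{0}) : Prop :=
  p ⊆ Set.Iio μ.ord ∧ scard p = Cardinal.lift.{1,0} μ

/-- The almost-inclusion ordering: `p₁ ≤ p₂` iff `|p₁ \ p₂| < μ`. -/
def condLe (μ : Cardinal.{0}) (p₁ p₂ : Set Ordinal.{0}) : Prop :=
  scard (p₁ \ p₂) < Cardinal.lift.{1,0} μ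

/-- Membership in the poset `Q`: closed subsets of `μ` of cardinality `μ`. -/
def InQ (μ : Cardinal.{0}) (q : Set Ordinal.{0}) : Prop :=
  InP μ q ∧ IsClosedCond q

/-- The interval `[μₙ, μₙ₊₁)`. -/
def interval (μseq : ℕ → Cardinal.{0}) (n : ℕ) : Set Ordinal.{0} :=
  Set.Ico ((μseq n).ord) ((μseq (n+1)).ord)

/-- `a(q) = {n : q ∩ [μₙ, μₙ₊₁) ≠ ∅}`. -/
def aSet (μseq : ℕ → Cardinal.{0}) (q : Set Ordinal.{0}) : Set ℕ :=
  {n | (q ∩ interval μseq n).Nonempty}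

/-- Normality: letting `⟨mₙ⟩` enumerate `a(q)` increasingly,
`otp (q ∩ [μ_{mₙ}, μ_{mₙ+1})) = μₙ + 1`. -/
def IsNormalCond (μseq : ℕ → Cardinal.{0}) (q : Set Ordinal.{0}) : Prop :=
  ∃ m : ℕ → ℕ, StrictMono m ∧ Set.range m = aSet μseq q ∧
    ∀ n, otp (q ∩ interval μseq (m n)) = Ordinal.lift.{1,0} ((μseq n).ord + 1)

/-- `χ⁺_q(n) = sup (q ∩ [μₙ, μₙ₊₁))`. -/
def chiP (μseq : ℕ → Cardinal.{0}) (q : Set Ordinal.{0}) (n : ℕ) : Ordinal.{0} :=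
  sSup (q ∩ interval μseq n)

/-- `χ⁻_q(n) = min (q ∩ [μₙ, μₙ₊₁))`. -/
def chiM (μseq : ℕ → Cardinal.{0}) (q : Set Ordinal.{0}) (n : ℕ) : Ordinal.{0} :=
  sInf (q ∩ interval μseq n)

/-- `μₙ` is a strictly increasing sequence of regular cardinals with supremum `μ`. -/
def GoodSeq (μ : Cardinal.{0}) (μseq : ℕ → Cardinal.{0}) : Prop :=
  StrictMono μseq ∧ (∀ n, (μseq n).IsRegular) ∧ μ = ⨆ n, μseq n

/-! ### Auxiliary lemmas -/

theorem otp_congr {s t : Set Ordinal.{0}} (e : s ≃o t) : otp s = otp t :=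
  Ordinal.type_eq.2 ⟨e.toRelIsoLT⟩

theorem otp_Iio (o : Ordinal.{0}) : otp (Set.Iio o) = Ordinal.lift.{1} o :=
  Ordinal.typein_ordinal o

theorem scard_eq_card_otp (s : Set Ordinal.{0}) : scard s = (otp s).card :=
  (Ordinal.card_type _).symm

theorem otp_insert_top {s : Set Ordinal.{0}} {τ : Ordinal.{0}} (hτ : τ ∉ s)
    (h : ∀ x ∈ s, x < τ) : otp (insert τ s) = otp s + 1 := by
  classical
  have key : otp (insert τ s) =
      Ordinal.type (Sum.Lex ((· < ·) : s → s → Prop) (@emptyRelation PUnit.{2})) := by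
    apply Ordinal.type_eq.2
    constructor
    refine RelIso.mk (Equiv.Set.insert hτ).symm ?_ |>.symm
    rintro (⟨b, hb⟩ | ⟨⟩) (⟨c, hc⟩ | ⟨⟩)
    · simp [Equiv.Set.insert_symm_apply_inl, Subtype.mk_lt_mk]
      exact Iff.rfl
    · simp only [Equiv.Set.insert_symm_apply_inl, Equiv.Set.insert_symm_apply_inr,
        Subtype.mk_lt_mk, Sum.Lex.sep, iff_true]
      exact h b hb
    · simp only [Equiv.Set.insert_symm_apply_inl, Equiv.Set.insert_symm_apply_inr,
        Subtype.mk_lt_mk, Sum.lex_inr_inl, iff_false]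
      exact (h c hc).asymm
    · simp only [Equiv.Set.insert_symm_apply_inr, Subtype.mk_lt_mk, Sum.lex_inr_inr,
        lt_self_iff_false, false_iff]
      exact fun hr => hr.elim
  have h1 : Ordinal.type (@emptyRelation PUnit.{2}) = 1 := Ordinal.type_eq_one_of_unique _
  rw [key, Ordinal.type_sum_lex, h1]
  rfl

theorem not_bddAbove_union_Ici (s : Set Ordinal.{0}) (B : Ordinal.{0}) :
    ¬ BddAbove (s ∪ Set.Ici B) := by
  intro h
  obtain ⟨x, hx⟩ := h.mono subset_union_right
  have h1 := hx (mem_Ici.2 (le_max_left B (x+1)))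
  have h2 : x + 1 ≤ max B (x+1) := le_max_right B (x+1)
  exact absurd (h2.trans h1) (by simp [Order.add_one_le_iff])

theorem smallq {b : Ordinal.{0}} {q : Set Ordinal.{0}} (hq : q ⊆ Set.Iio b) :
    Small.{0} q :=
  have := Ordinal.small_Iio b
  small_subset hq

theorem enum_union_mem {s : Set Ordinal.{0}} {B : Ordinal.{0}} (hsB : ∀ x ∈ s, x < B)
    {i : Ordinal.{0}} (hi : Cardinal.lift.{1} i.card < scard s) :
    Ordinal.enumOrd (s ∪ Set.Ici B) i ∈ s := by
  set t := s ∪ Set.Ici B with ht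
  have hub : ¬ BddAbove t := not_bddAbove_union_Ici s B
  rcases Ordinal.enumOrd_mem hub i with hmem | hmem
  · exact hmem
  · exfalso
    have hBle : B ≤ Ordinal.enumOrd t i := hmem
    have hsub : s ⊆ Ordinal.enumOrd t '' Set.Iio i := by
      intro x hx
      obtain ⟨j, hj⟩ := Ordinal.enumOrd_surjective hub (Or.inl hx : x ∈ t)
      refine ⟨j, ?_, hj⟩
      have : Ordinal.enumOrd t j < Ordinal.enumOrd t i := hj ▸ (hsB x hx).trans_le hBle
      exact (Ordinal.enumOrd_strictMono hub).lt_iff_lt.1 this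
    have : scard s ≤ Cardinal.lift.{1} i.card := by
      calc scard s ≤ #(Ordinal.enumOrd t '' Set.Iio i) := mk_le_mk_of_subset hsub
        _ ≤ #(Set.Iio i) := mk_image_le
        _ = Cardinal.lift.{1} i.card := Ordinal.mk_Iio_ordinal i
    exact (hi.not_ge this).elim

theorem bddAbove_of_lt {s : Set Ordinal.{0}} {b : Ordinal.{0}} (h : s ⊆ Set.Iio b) :
    BddAbove s := ⟨b, fun _ hx => (h hx).le⟩

theorem sSup_lt_ord_of_regular {c : Cardinal.{0}} (hc : c.IsRegular) {s : Set Ordinal.{0}}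
    (hs : s ⊆ Set.Iio c.ord) (hcard : scard s < Cardinal.lift.{1} c) : sSup s < c.ord := by
  have hcpos : (0 : Ordinal.{0}) < c.ord := by
    rw [Cardinal.lt_ord]; simpa using hc.pos
  rcases s.eq_empty_or_nonempty with rfl | hne
  · simpa using hcpos
  · have hsm : Small.{0} s := smallq hs
    set f : Shrink.{0} s → Ordinal.{0} := fun j => ((equivShrink s).symm j : Ordinal.{0}) with hf
    have hlt : ∀ j, f j < c.ord := fun j => hs ((equivShrink s).symm j).2
    have hmk : #(Shrink.{0} s) < c.ord.cof := by
      rw [hc.cof_eq]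
      have : Cardinal.lift.{1} #(Shrink.{0} s) = #s := by
        rw [Cardinal.lift_mk_shrink'' (↥s)]
      rw [← Cardinal.lift_lt.{0,1}, this]
      exact hcard
    have hsup := Ordinal.iSup_lt_ord hmk hlt
    refine lt_of_le_of_lt (csSup_le hne fun x hx => ?_) hsup
    have : x = f (equivShrink s ⟨x, hx⟩) := by simp [hf]
    rw [this]
    exact le_ciSup Ordinal.bddAbove_of_small _

/-- The set of normal conditions is dense in . -/
theorem stmt_2 (μ : Cardinal.{0}) (hinf : Cardinal.aleph0 < μ)
    (hcof : μ.ord.cof = Cardinal.aleph0)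
    (μseq : ℕ → Cardinal.{0}) (hseq : GoodSeq μ μseq)
    (q : Set Ordinal.{0}) (hq : InQ μ q) :
    ∃ q' : Set Ordinal.{0}, InQ μ q' ∧ IsNormalCond μseq q' ∧ condLe μ q' q := by
  classical
  obtain ⟨⟨hqsub, hqcard⟩, hqclosed⟩ := hq
  obtain ⟨hmono, hreg, hsup⟩ := hseq
  have hbdd_range : BddAbove (Set.range μseq) := Cardinal.bddAbove_range μseq
  have hμn_lt : ∀ n, μseq n < μ := by
    intro n
    rw [hsup]
    exact lt_of_lt_of_le (hmono (Nat.lt_succ_self n)) (le_ciSup hbdd_range (n+1))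
  have hμpos : 0 < μ := aleph0_pos.trans hinf
  have hord_sup : μ.ord = ⨆ n, (μseq n).ord := by
    rw [hsup]; exact Ordinal.iSup_ord _
  have hordn_lt : ∀ n, (μseq n).ord < μ.ord := fun n => Cardinal.ord_lt_ord.2 (hμn_lt n)
  have haln : ∀ n, ℵ₀ ≤ μseq n := fun n => (hreg n).aleph0_le
  have hμordpos : (0 : Ordinal.{0}) < μ.ord := by
    rw [Cardinal.lt_ord]; simpa using hμpos
  have hsmallq : Small.{0} q := smallq hqsub
  -- q is unbounded below μ.ord
  have hqunb : ∀ β : Ordinal.{0}, β < μ.ord → ∃ x ∈ q, β ≤ x := by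
    intro β hβ
    by_contra hcon
    push_neg at hcon
    have h1 : scard q ≤ Cardinal.lift.{1} β.card := by
      calc scard q ≤ #(Set.Iio β) := mk_le_mk_of_subset (fun x hx => hcon x hx)
        _ = Cardinal.lift.{1} β.card := Ordinal.mk_Iio_ordinal β
    rw [hqcard] at h1
    exact absurd (Cardinal.lt_ord.1 hβ) (Cardinal.lift_le.1 h1).not_gt
  have hqne : q.Nonempty := by
    obtain ⟨x, hx, _⟩ := hqunb 0 hμordpos; exact ⟨x, hx⟩
  have hssupq_le : sSup q ≤ μ.ord := csSup_le hqne fun x hx => (hqsub hx).le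
  -- intervals are increasingly ordered
  have hint_lt : ∀ {j k : ℕ}, j < k → ∀ x ∈ interval μseq j, ∀ y ∈ interval μseq k, x < y := by
    intro j k hjk x hx y hy
    calc x < (μseq (j+1)).ord := hx.2
      _ ≤ (μseq k).ord := Cardinal.ord_le_ord.2 (hmono.monotone hjk)
      _ ≤ y := hy.1
  -- Step C : large intersections with arbitrarily late intervals
  have hC : ∀ k n : ℕ, ∃ M, k ≤ M ∧
      Cardinal.lift.{1} (μseq n) ≤ scard (q ∩ interval μseq M) := by
    intro k n
    by_contra hcon
    push_neg at hcon
    have hcover : q ⊆ (Set.Iio ((μseq k).ord)) ∪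
        ⋃ (M : ULift.{1} ℕ), (q ∩ interval μseq (k + M.down)) := by
      intro x hx
      have hxμ : x < μ.ord := hqsub hx
      have hex : ∃ j, x < (μseq j).ord := by
        by_contra hc; push_neg at hc
        have : μ.ord ≤ x := by rw [hord_sup]; exact ciSup_le hc
        exact absurd hxμ this.not_gt
      by_cases hk : x < (μseq k).ord
      · exact Or.inl hk
      · right
        push_neg at hk
        have hj0 : x < (μseq (Nat.find hex)).ord := Nat.find_spec hex
        have hj0k : k < Nat.find hex := by
          by_contra h; push_neg at h
          exact absurd (lt_of_lt_of_le hj0 (Cardinal.ord_le_ord.2 (hmono.monotone h)))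
            hk.not_gt
        have hge : (μseq (Nat.find hex - 1)).ord ≤ x := by
          have := Nat.find_min hex (m := Nat.find hex - 1) (by omega)
          push_neg at this
          exact this
        refine mem_iUnion.2 ⟨⟨Nat.find hex - 1 - k⟩, hx, ?_, ?_⟩
        · have he : k + (Nat.find hex - 1 - k) = Nat.find hex - 1 := by omega
          rw [he]; exact hge
        · have he : k + (Nat.find hex - 1 - k) + 1 = Nat.find hex := by omega
          rw [he]; exact hj0
    have hcard1 : scard q ≤ Cardinal.lift.{1} (μseq k) + Cardinal.lift.{1} (μseq n) := by
      calc scard q ≤ #(↥((Set.Iio ((μseq k).ord)) ∪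
            ⋃ (M : ULift.{1} ℕ), (q ∩ interval μseq (k + M.down)))) :=
          mk_le_mk_of_subset hcover
        _ ≤ #(Set.Iio ((μseq k).ord)) +
            #(⋃ (M : ULift.{1} ℕ), (q ∩ interval μseq (k + M.down))) := mk_union_le _ _
        _ ≤ Cardinal.lift.{1} (μseq k) + Cardinal.lift.{1} (μseq n) := by
            gcongr
            · rw [Ordinal.mk_Iio_ordinal, Cardinal.card_ord]
            · calc #(⋃ (M : ULift.{1} ℕ), (q ∩ interval μseq (k + M.down)))
                  ≤ #(ULift.{1} ℕ) * ⨆ (M : ULift.{1} ℕ), #(↥(q ∩ interval μseq (k + M.down))) :=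
                    mk_iUnion_le _
                _ ≤ ℵ₀ * Cardinal.lift.{1} (μseq n) := by
                    gcongr
                    · simp
                    · exact ciSup_le' fun M => (hcon _ (Nat.le_add_right k M.down)).le
                _ = Cardinal.lift.{1} (μseq n) := by
                    rw [Cardinal.mul_eq_max le_rfl (by simpa using haln n)]
                    exact max_eq_right (by simpa using haln n)
    rw [hqcard] at hcard1
    have : Cardinal.lift.{1} μ < Cardinal.lift.{1} μ := by
      refine lt_of_le_of_lt hcard1 (Cardinal.add_lt_of_lt ?_ ?_ ?_)
      · simpa using hinf.le
      · exact Cardinal.lift_lt.2 (hμn_lt k)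
      · exact Cardinal.lift_lt.2 (hμn_lt n)
    exact absurd this (lt_irrefl _)
  -- Step D : choose the intervals
  choose F hF1 hF2 using hC
  set mf : ℕ → ℕ := fun n => Nat.rec (F 0 0) (fun n ih => F (ih+1) (n+1)) n with hmf
  have hmfs : ∀ n, mf (n+1) = F (mf n + 1) (n+1) := fun n => rfl
  have hmf_mono : StrictMono mf := by
    apply strictMono_nat_of_lt_succ
    intro n
    calc mf n < mf n + 1 := Nat.lt_succ_self _
      _ ≤ mf (n+1) := by rw [hmfs]; exact hF1 _ _
  have hmf_card : ∀ n, Cardinal.lift.{1} (μseq n) ≤ scard (q ∩ interval μseq (mf n)) := by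
    intro n
    cases n with
    | zero => exact hF2 0 0
    | succ n => exact hF2 _ _
  -- the pieces
  set s : ℕ → Set Ordinal.{0} := fun n => q ∩ interval μseq (mf n) with hs
  set B : ℕ → Ordinal.{0} := fun n => (μseq (mf n + 1)).ord with hB
  have hsB : ∀ n, ∀ x ∈ s n, x < B n := fun n x hx => hx.2.2
  set t : ℕ → Set Ordinal.{0} := fun n => s n ∪ Set.Ici (B n) with htdef
  have htub : ∀ n, ¬ BddAbove (t n) := fun n => not_bddAbove_union_Ici _ _
  set g : ℕ → Ordinal.{0} → Ordinal.{0} := fun n i => Ordinal.enumOrd (t n) i with hg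
  have hg_mono : ∀ n, StrictMono (g n) := fun n => Ordinal.enumOrd_strictMono (htub n)
  have hgmem : ∀ n, ∀ i < (μseq n).ord, g n i ∈ s n := by
    intro n i hi
    apply enum_union_mem (hsB n)
    calc Cardinal.lift.{1} i.card < Cardinal.lift.{1} (μseq n) :=
        Cardinal.lift_lt.2 (Cardinal.lt_ord.1 hi)
      _ ≤ scard (s n) := hmf_card n
  set S : ℕ → Set Ordinal.{0} := fun n => g n '' Set.Iio ((μseq n).ord) with hS
  have hSsub : ∀ n, S n ⊆ s n := by
    rintro n x ⟨i, hi, rfl⟩; exact hgmem n i hi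
  have hordpos : ∀ n, (0 : Ordinal.{0}) < (μseq n).ord := fun n =>
    Cardinal.lt_ord.2 (by simpa using (hreg n).pos)
  have hSne : ∀ n, (S n).Nonempty := fun n => ⟨g n 0, mem_image_of_mem _ (hordpos n)⟩
  set τ : ℕ → Ordinal.{0} := fun n => sSup (S n) with hτ
  have hSIio : ∀ n, S n ⊆ Set.Iio (B n) := fun n x hx => hsB n x (hSsub n hx)
  have hSbdd : ∀ n, BddAbove (S n) := fun n => bddAbove_of_lt (hSIio n)
  have hScard : ∀ n, scard (S n) ≤ Cardinal.lift.{1} (μseq n) := by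
    intro n
    calc scard (S n) ≤ #(Set.Iio ((μseq n).ord)) := mk_image_le
      _ = Cardinal.lift.{1} (μseq n) := by
          rw [Ordinal.mk_Iio_ordinal, Cardinal.card_ord]
  have hτB : ∀ n, τ n < B n := by
    intro n
    apply sSup_lt_ord_of_regular (hreg (mf n + 1)) (hSIio n)
    calc scard (S n) ≤ Cardinal.lift.{1} (μseq n) := hScard n
      _ < Cardinal.lift.{1} (μseq (mf n + 1)) :=
          Cardinal.lift_lt.2 (hmono (Nat.lt_succ_of_le hmf_mono.le_apply))
  have hxlt_τ : ∀ n, ∀ x ∈ S n, x < τ n := by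
    rintro n x ⟨i, hi, rfl⟩
    have hi1 : i + 1 < (μseq n).ord := by
      rw [Ordinal.add_one_eq_succ]
      exact (Cardinal.isSuccLimit_ord (haln n)).succ_lt hi
    calc g n i < g n (i+1) := hg_mono n (by rw [Ordinal.add_one_eq_succ]; exact Order.lt_succ i)
      _ ≤ τ n := le_csSup (hSbdd n) (mem_image_of_mem _ hi1)
  have hτnotmem : ∀ n, τ n ∉ S n := fun n h => absurd (hxlt_τ n _ h) (lt_irrefl _)
  have hτlow : ∀ n, (μseq (mf n)).ord ≤ τ n := by
    intro n
    obtain ⟨x, hx⟩ := hSne n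
    exact le_trans (hSsub n hx).2.1 (hxlt_τ n x hx).le
  have hτq : ∀ n, τ n ∈ q := by
    intro n
    apply hqclosed
    refine ⟨⟨?_, ?_⟩, ?_⟩
    · obtain ⟨x, hx⟩ := hSne n
      exact ⟨x, (hSsub n hx).1, hxlt_τ n x hx⟩
    · apply le_antisymm
      · refine csSup_le (hSne n) fun x hx => ?_
        exact le_csSup (bddAbove_of_lt (inter_subset_right (s := q)))
          ⟨(hSsub n hx).1, hxlt_τ n x hx⟩
      · refine csSup_le ?_ fun y hy => hy.2.le
        obtain ⟨x, hx⟩ := hSne n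
        exact ⟨x, (hSsub n hx).1, hxlt_τ n x hx⟩
    · obtain ⟨y, hyq, hy⟩ := hqunb (B n) (hordn_lt (mf n + 1))
      exact lt_of_lt_of_le ((hτB n).trans_le hy) (le_csSup (Ordinal.bddAbove_of_small (s := q)) hyq)
  set P : ℕ → Set Ordinal.{0} := fun n => insert (τ n) (S n) with hP
  have hPsub : ∀ n, P n ⊆ q ∩ interval μseq (mf n) := by
    intro n x hx
    rcases hx with rfl | hx
    · exact ⟨hτq n, hτlow n, hτB n⟩
    · exact hSsub n hx
  have hPint : ∀ n, P n ⊆ interval μseq (mf n) := fun n x hx => (hPsub n hx).2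
  have hyleτ : ∀ k y, y ∈ P k → y ≤ τ k := by
    rintro k y (rfl | hy)
    · exact le_rfl
    · exact (hxlt_τ k y hy).le
  set q' : Set Ordinal.{0} := ⋃ n, P n with hq'
  have hq'sub : q' ⊆ q := iUnion_subset fun n x hx => (hPsub n hx).1
  have hq'ne : q'.Nonempty := ⟨τ 0, mem_iUnion.2 ⟨0, mem_insert _ _⟩⟩
  have hssupq'_le : sSup q' ≤ sSup q :=
    csSup_le_csSup (Ordinal.bddAbove_of_small (s := q)) hq'ne hq'sub
  -- order types of the pieces
  have hotpS : ∀ n, otp (S n) = Ordinal.lift.{1} ((μseq n).ord) := by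
    intro n
    have e : ↥(Set.Iio ((μseq n).ord)) ≃o ↥(S n) := by
      refine StrictMono.orderIsoOfSurjective
        (fun i => ⟨g n i.1, mem_image_of_mem _ i.2⟩) ?_ ?_
      · intro a b hab
        exact hg_mono n hab
      · rintro ⟨x, i, hi, rfl⟩
        exact ⟨⟨i, hi⟩, rfl⟩
    rw [← otp_congr e, otp_Iio]
  have hotpP : ∀ n, otp (P n) = Ordinal.lift.{1} ((μseq n).ord + 1) := by
    intro n
    rw [hP]
    rw [otp_insert_top (hτnotmem n) (hxlt_τ n), hotpS n, Ordinal.lift_add, Ordinal.lift_one]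
  -- intersections with intervals
  have hq'int : ∀ n, q' ∩ interval μseq (mf n) = P n := by
    intro n
    apply Subset.antisymm
    · rintro x ⟨hx', hxint⟩
      obtain ⟨k, hk⟩ := mem_iUnion.1 hx'
      rcases lt_trichotomy k n with h | rfl | h
      · exact absurd (hint_lt (hmf_mono h) x (hPint k hk) x hxint) (lt_irrefl x)
      · exact hk
      · exact absurd (hint_lt (hmf_mono h) x hxint x (hPint k hk)) (lt_irrefl x)
    · exact fun x hx => ⟨mem_iUnion.2 ⟨n, hx⟩, hPint n hx⟩
  have hq'int_not : ∀ j, j ∉ Set.range mf → q' ∩ interval μseq j = ∅ := by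
    intro j hj
    rw [eq_empty_iff_forall_notMem]
    rintro x ⟨hx', hxint⟩
    obtain ⟨k, hk⟩ := mem_iUnion.1 hx'
    have hne : mf k ≠ j := fun h => hj ⟨k, h⟩
    rcases hne.lt_or_gt with h | h
    · exact absurd (hint_lt h x (hPint k hk) x hxint) (lt_irrefl x)
    · exact absurd (hint_lt h x hxint x (hPint k hk)) (lt_irrefl x)
  have haSet : Set.range mf = aSet μseq q' := by
    ext j
    constructor
    · rintro ⟨n, rfl⟩
      refine ⟨τ n, ?_⟩
      rw [hq'int n]
      exact mem_insert _ _
    · rintro ⟨x, hx⟩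
      by_contra hj
      rw [hq'int_not j hj] at hx
      exact hx
  -- cardinality of q'
  have hScard_eq : ∀ n, scard (S n) = Cardinal.lift.{1} (μseq n) := by
    intro n
    rw [scard_eq_card_otp, hotpS n, ← Ordinal.lift_card, Cardinal.card_ord]
  have hq'card : scard q' = Cardinal.lift.{1} μ := by
    apply le_antisymm
    · rw [← hqcard]; exact mk_le_mk_of_subset hq'sub
    · rw [hsup, Cardinal.lift_iSup hbdd_range]
      refine ciSup_le' fun n => ?_
      rw [← hScard_eq n]
      exact mk_le_mk_of_subset fun x hx => mem_iUnion.2 ⟨n, Or.inr hx⟩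
  -- monotonicity of τ
  have hτle : ∀ {k l : ℕ}, k ≤ l → τ k ≤ τ l := by
    intro k l hkl
    rcases eq_or_lt_of_le hkl with rfl | h
    · exact le_rfl
    · refine le_trans (le_trans (hτB k).le ?_) (hτlow l)
      exact Cardinal.ord_le_ord.2 (hmono.monotone (Nat.succ_le_of_lt (hmf_mono h)))
  -- closedness of q'
  have hclosed : IsClosedCond q' := by
    rintro α ⟨⟨hne, hsupα⟩, hlt⟩
    have hneq : (q ∩ Set.Iio α).Nonempty :=
      hne.mono fun x hx => ⟨hq'sub hx.1, hx.2⟩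
    have hαq : α ∈ q := by
      apply hqclosed
      refine ⟨⟨hneq, ?_⟩, hlt.trans_le hssupq'_le⟩
      apply le_antisymm
      · calc α = sSup (q' ∩ Set.Iio α) := hsupα
          _ ≤ sSup (q ∩ Set.Iio α) :=
            csSup_le_csSup (bddAbove_of_lt (inter_subset_right (s := q))) hne
              (fun x hx => ⟨hq'sub hx.1, hx.2⟩)
      · exact csSup_le hneq fun y hy => hy.2.le
    set N : Set ℕ := {n : ℕ | (P n ∩ Set.Iio α).Nonempty} with hN
    have hNne : N.Nonempty := by
      obtain ⟨x, hx1, hx2⟩ := hne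
      obtain ⟨k, hk⟩ := mem_iUnion.1 hx1
      exact ⟨k, x, hk, hx2⟩
    have hkey : ∃ n ∈ N, α ≤ τ n := by
      by_contra hcon
      push_neg at hcon
      by_cases hbN : BddAbove N
      · have hn0 : sSup N ∈ N := Nat.sSup_mem hNne hbN
        have hle : α ≤ τ (sSup N) := by
          rw [hsupα]
          refine csSup_le hne fun y hy => ?_
          obtain ⟨k, hk⟩ := mem_iUnion.1 hy.1
          exact le_trans (hyleτ k y hk) (hτle (le_csSup hbN ⟨y, hk, hy.2⟩))
        exact absurd hle (hcon _ hn0).not_ge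
      · have hge : μ.ord ≤ α := by
          rw [hord_sup]
          refine ciSup_le fun k => ?_
          obtain ⟨n, hnN, hkn⟩ : ∃ n ∈ N, k ≤ n := by
            by_contra h; push_neg at h
            exact hbN ⟨k, fun n hn => (h n hn).le⟩
          calc (μseq k).ord ≤ (μseq (mf n)).ord :=
              Cardinal.ord_le_ord.2 (hmono.monotone (hkn.trans hmf_mono.le_apply))
            _ ≤ τ n := hτlow n
            _ ≤ α := (hcon n hnN).le
        have hαμ : α < μ.ord := hlt.trans_le (hssupq'_le.trans hssupq_le)
        exact absurd hαμ hge.not_gt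
    obtain ⟨n, hnN, hατ⟩ := hkey
    rcases eq_or_lt_of_le hατ with rfl | hατ'
    · exact mem_iUnion.2 ⟨n, mem_insert _ _⟩
    · obtain ⟨x₀, hx₀P, hx₀α⟩ := hnN
      have hx₀S : x₀ ∈ S n := by
        rcases hx₀P with rfl | h
        · exact absurd (hx₀α.trans hατ') (lt_irrefl _)
        · exact h
      have hαs : α ∈ s n :=
        ⟨hαq, le_trans (hSsub n hx₀S).2.1 hx₀α.le, hατ'.trans (hτB n)⟩
      obtain ⟨j, hj⟩ := Ordinal.enumOrd_surjective (htub n) (Or.inl hαs : α ∈ t n)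
      have hjlt : j < (μseq n).ord := by
        by_contra h
        push_neg at h
        have hτα : τ n ≤ α := by
          refine csSup_le (hSne n) ?_
          rintro x ⟨i, hi, rfl⟩
          exact hj ▸ (hg_mono n (hi.trans_le h)).le
        exact absurd hατ' hτα.not_gt
      exact mem_iUnion.2 ⟨n, Or.inr ⟨j, hjlt, hj⟩⟩
  -- assembling everything
  refine ⟨q', ⟨⟨hq'sub.trans hqsub, hq'card⟩, hclosed⟩,
    ⟨mf, hmf_mono, haSet, fun n => by rw [hq'int n]; exact hotpP n⟩, ?_⟩
  have hempty : q' \ q = ∅ := diff_eq_empty.2 hq'sub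
  rw [condLe, hempty]
  have : scard (∅ : Set Ordinal.{0}) = 0 := mk_emptyCollection _
  rw [this]
  simpa using hμpos
end
end

section
/- Let μ be a singular cardinal of cofinality ω with increasing regular cardinals μₙ cofinal in μ. The poset Q of closed subsets of μ of size μ (ordered by almost-inclusion mod sets of size < μ) is σ-closed: every decreasing ω-sequence q₀ ≥ q₁ ≥ q₂ ≥ … in Q has a lower bound q ∈ Q. -/
open Cardinal Set

noncomputable section

lemma scard_mono {s t : Set Ordinal.{0}} (h : s ⊆ t) : scard s ≤ scard t :=
  Cardinal.mk_le_mk_of_subset h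

lemma bddAbove_of_subset_Iio {s : Set Ordinal.{0}} {a : Ordinal} (h : s ⊆ Set.Iio a) :
    BddAbove s := ⟨a, fun _ hx => le_of_lt (h hx)⟩

lemma accSet_pos {s : Set Ordinal.{0}} {α : Ordinal} (h : α ∈ accSet s) : 0 < α := by
  obtain ⟨x, _, hx⟩ := h.1
  exact lt_of_le_of_lt (zero_le (a := x)) hx

lemma accSet_intro {s : Set Ordinal.{0}} {α : Ordinal} (h0 : 0 < α)
    (h : ∀ y < α, ∃ x, x ∈ s ∧ y < x ∧ x < α) : α ∈ accSet s := by
  obtain ⟨x0, hx0, _, hx0'⟩ := h 0 h0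
  have hne : (s ∩ Set.Iio α).Nonempty := ⟨x0, hx0, hx0'⟩
  refine ⟨hne, le_antisymm ?_ ?_⟩
  · refine le_of_forall_lt fun y hy => ?_
    obtain ⟨x, hx, hyx, hxα⟩ := h y hy
    exact lt_of_lt_of_le hyx
      (le_csSup (bddAbove_of_subset_Iio (fun z hz => hz.2)) ⟨hx, hxα⟩)
  · exact csSup_le hne fun x hx => le_of_lt hx.2

lemma accSet_elim {s : Set Ordinal.{0}} {α : Ordinal} (h : α ∈ accSet s) :
    ∀ y < α, ∃ x, x ∈ s ∧ y < x ∧ x < α := by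
  intro y hy
  have hy' : y < sSup (s ∩ Set.Iio α) := h.2 ▸ hy
  obtain ⟨x, hx, hyx⟩ := exists_lt_of_lt_csSup h.1 hy'
  exact ⟨x, hx.1, hyx, hx.2⟩

/-- The poset  of closed size- subsets of  is σ-closed:
every decreasing -sequence has a lower bound in . -/
theorem stmt_3 (μ : Cardinal.{0}) (hinf : Cardinal.aleph0 < μ)
    (hcof : μ.ord.cof = Cardinal.aleph0)
    (μseq : ℕ → Cardinal.{0}) (hseq : GoodSeq μ μseq)
    (qs : ℕ → Set Ordinal.{0}) (hqs : ∀ n, InQ μ (qs n))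
    (hdec : ∀ n, condLe μ (qs (n+1)) (qs n)) :
    ∃ q : Set Ordinal.{0}, InQ μ q ∧ ∀ n, condLe μ q (qs n) := by
  obtain ⟨hmonoseq, hreg, hsupeq⟩ := hseq
  have hμ0 : ℵ₀ ≤ μ := hinf.le
  have hlim : Order.IsSuccLimit μ.ord := Cardinal.isSuccLimit_ord hμ0
  have hΛ0 : (0 : Ordinal) < μ.ord := hlim.pos
  have hliftinf : (ℵ₀ : Cardinal.{1}) ≤ Cardinal.lift.{1} μ := by
    simpa using Cardinal.lift_le.{1}.2 hμ0
  have hseqlt : ∀ n, μseq n < μ := fun n =>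
    lt_of_lt_of_le (hmonoseq (Nat.lt_succ_self n))
      (hsupeq ▸ le_ciSup (Cardinal.bddAbove_range _) (n + 1))
  have hseqord : ∀ n, (μseq n).ord < μ.ord := fun n => Cardinal.ord_lt_ord.2 (hseqlt n)
  have hcofseq : ∀ x < μ.ord, ∃ n, x < (μseq n).ord := by
    intro x hx
    have h1 : x.card < ⨆ n, μseq n := hsupeq ▸ Cardinal.lt_ord.1 hx
    obtain ⟨n, hn⟩ := (lt_ciSup_iff (Cardinal.bddAbove_range _)).1 h1
    exact ⟨n, Cardinal.lt_ord.2 hn⟩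
  -- bounded sets are small
  have small_bdd : ∀ {s : Set Ordinal.{0}} {a : Ordinal}, s ⊆ Set.Iio a → a < μ.ord →
      scard s < Cardinal.lift.{1} μ := by
    intro s a hsa ha
    calc scard s ≤ scard (Set.Iio a) := scard_mono hsa
      _ = Cardinal.lift.{1} a.card := Ordinal.mk_Iio_ordinal a
      _ < Cardinal.lift.{1} μ := Cardinal.lift_lt.2 (Cardinal.lt_ord.1 ha)
  -- big sets are unbounded
  have sSup_eq : ∀ {s : Set Ordinal.{0}}, s ⊆ Set.Iio μ.ord →
      scard s = Cardinal.lift.{1} μ → sSup s = μ.ord := by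
    intro s hs hc
    have hne : s.Nonempty := by
      rw [← Set.nonempty_coe_sort, ← Cardinal.mk_ne_zero_iff]
      show scard s ≠ 0
      rw [hc]
      exact ne_of_gt (lt_of_lt_of_le Cardinal.aleph0_pos hliftinf)
    refine le_antisymm (csSup_le hne fun x hx => (hs hx).le) ?_
    by_contra hlt
    push_neg at hlt
    have hsub : s ⊆ Set.Iio (sSup s + 1) := fun x hx => by
      have := le_csSup (bddAbove_of_subset_Iio hs) hx
      rw [Set.mem_Iio, Ordinal.add_one_eq_succ]
      exact Order.lt_succ_of_le this
    have : scard s < Cardinal.lift.{1} μ := by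
      apply small_bdd hsub
      rw [Ordinal.add_one_eq_succ]
      exact hlim.succ_lt hlt
    rw [hc] at this
    exact lt_irrefl _ this
  -- large sets contain bounded chunks of any prescribed small size
  have exists_chunk : ∀ (s : Set Ordinal.{0}), s ⊆ Set.Iio μ.ord →
      scard s = Cardinal.lift.{1} μ → ∀ c : Cardinal.{0}, ℵ₀ ≤ c → c < μ →
      ∃ γ < μ.ord, Cardinal.lift.{1} c ≤ scard (s ∩ Set.Iio γ) := by
    intro s hs hc c hcinf hclt
    by_contra hcon
    push_neg at hcon
    have hcover : s = ⋃ (n : ULift.{1} ℕ), s ∩ Set.Iio ((μseq n.down).ord) := by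
      ext x
      simp only [Set.mem_iUnion, Set.mem_inter_iff, Set.mem_Iio]
      constructor
      · intro hx
        obtain ⟨n, hn⟩ := hcofseq x (hs hx)
        exact ⟨⟨n⟩, hx, hn⟩
      · rintro ⟨n, hx, _⟩; exact hx
    have h1 : scard s ≤ #(ULift.{1} ℕ) * ⨆ n : ULift.{1} ℕ, scard (s ∩ Set.Iio ((μseq n.down).ord)) := by
      conv_lhs => rw [show scard s = #(⋃ (n : ULift.{1} ℕ), s ∩ Set.Iio ((μseq n.down).ord)) by rw [← hcover]; rfl]
      exact Cardinal.mk_iUnion_le _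
    have h2 : (⨆ n : ULift.{1} ℕ, scard (s ∩ Set.Iio ((μseq n.down).ord))) ≤ Cardinal.lift.{1} c :=
      ciSup_le fun n => (hcon _ (hseqord _)).le
    have h3 : #(ULift.{1} ℕ) = (ℵ₀ : Cardinal.{1}) := by simp
    have hfin : scard s ≤ Cardinal.lift.{1} c := by
      calc scard s ≤ _ := h1
        _ ≤ (ℵ₀ : Cardinal.{1}) * Cardinal.lift.{1} c := by
            rw [h3]; exact mul_le_mul_right h2 _
        _ = Cardinal.lift.{1} c := Cardinal.aleph0_mul_eq (by simpa using Cardinal.lift_le.{1}.2 hcinf)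
    rw [hc] at hfin
    exact absurd (Cardinal.lift_le.1 hfin) (not_le.2 hclt)
  -- subsets with small complement are large
  have large_diff : ∀ {s t : Set Ordinal.{0}}, t ⊆ s → scard s = Cardinal.lift.{1} μ →
      scard (s \ t) < Cardinal.lift.{1} μ → scard t = Cardinal.lift.{1} μ := by
    intro s t hts hs hsmall
    refine le_antisymm (hs ▸ scard_mono hts) ?_
    by_contra h
    push_neg at h
    have hu : scard s ≤ scard t + scard (s \ t) := by
      calc scard s ≤ scard (t ∪ (s \ t)) := by
            apply scard_mono
            intro x hx
            by_cases hxt : x ∈ t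
            · exact Or.inl hxt
            · exact Or.inr ⟨hx, hxt⟩
        _ ≤ scard t + scard (s \ t) := Cardinal.mk_union_le _ _
    have := lt_of_le_of_lt hu (Cardinal.add_lt_of_lt hliftinf h hsmall)
    rw [hs] at this
    exact lt_irrefl _ this
  -- the finite intersections D n
  set D : ℕ → Set Ordinal.{0} := fun n => Nat.rec (qs 0) (fun n Dn => Dn ∩ qs (n + 1)) n with hD
  have hDsucc : ∀ n, D (n + 1) = D n ∩ qs (n + 1) := fun n => rfl
  have hDsub : ∀ n k, k ≤ n → D n ⊆ qs k := by
    intro n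
    induction n with
    | zero => intro k hk; rw [Nat.le_zero.1 hk]; exact fun x hx => hx
    | succ n ih =>
      intro k hk
      rcases Nat.eq_or_lt_of_le hk with h | h
      · rw [h]; exact fun x hx => hx.2
      · exact fun x hx => ih k (Nat.lt_succ_iff.1 h) hx.1
  have hDIio : ∀ n, D n ⊆ Set.Iio μ.ord := fun n => (hDsub n 0 (Nat.zero_le n)).trans (hqs 0).1.1
  have hDdiff : ∀ n, scard (qs n \ D n) < Cardinal.lift.{1} μ := by
    intro n
    induction n with
    | zero =>
      have : qs 0 \ D 0 = ∅ := by simp [hD]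
      rw [this]
      have : scard (∅ : Set Ordinal.{0}) = 0 := Cardinal.mk_emptyCollection _
      rw [this]
      exact lt_of_lt_of_le Cardinal.aleph0_pos hliftinf
    | succ n ih =>
      have hsub : qs (n + 1) \ D (n + 1) ⊆ (qs (n + 1) \ qs n) ∪ (qs n \ D n) := by
        intro x ⟨hx1, hx2⟩
        rw [hDsucc] at hx2
        by_cases hxn : x ∈ qs n
        · refine Or.inr ⟨hxn, fun hxD => hx2 ⟨hxD, hx1⟩⟩
        · exact Or.inl ⟨hx1, hxn⟩
      calc scard (qs (n + 1) \ D (n + 1)) ≤ scard ((qs (n + 1) \ qs n) ∪ (qs n \ D n)) :=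
            scard_mono hsub
        _ ≤ scard (qs (n + 1) \ qs n) + scard (qs n \ D n) := Cardinal.mk_union_le _ _
        _ < Cardinal.lift.{1} μ := Cardinal.add_lt_of_lt hliftinf (hdec n) ih
  have hDcard : ∀ n, scard (D n) = Cardinal.lift.{1} μ := fun n =>
    large_diff (hDsub n n le_rfl) (hqs n).1.2 (hDdiff n)
  -- closedness of the qs and of D n
  have closedQ : ∀ k, accSet (qs k) ∩ Set.Iio μ.ord ⊆ qs k := by
    intro k
    have h := (hqs k).2
    rwa [IsClosedCond, sSup_eq (hqs k).1.1 (hqs k).1.2] at h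
  have accSet_mono : ∀ {s t : Set Ordinal.{0}}, s ⊆ t → accSet s ⊆ accSet t := by
    intro s t h α hα
    apply accSet_intro (accSet_pos hα)
    intro y hy
    obtain ⟨x, hx, h1, h2⟩ := accSet_elim hα y hy
    exact ⟨x, h hx, h1, h2⟩
  have hDacc : ∀ n, accSet (D n) ∩ Set.Iio μ.ord ⊆ D n := by
    intro n
    induction n with
    | zero => exact closedQ 0
    | succ n ih =>
      intro α hα
      rw [hDsucc]
      refine ⟨ih ⟨accSet_mono (fun x hx => hx.1) hα.1, hα.2⟩, ?_⟩
      exact closedQ (n + 1) ⟨accSet_mono (fun x (hx : x ∈ D n ∩ qs (n+1)) => hx.2) hα.1, hα.2⟩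
  -- choice of the β sequence
  have key : ∀ (n : ℕ) (b : Ordinal), b < μ.ord →
      ∃ γ, b < γ ∧ γ < μ.ord ∧ (μseq n).ord < γ ∧
        Cardinal.lift.{1} (μseq n) ≤ scard (D n ∩ Set.Ico b γ) := by
    intro n b hb
    have hs1 : D n ∩ Set.Ici b ⊆ Set.Iio μ.ord := fun x hx => hDIio n hx.1
    have hsmall : scard (D n \ (D n ∩ Set.Ici b)) < Cardinal.lift.{1} μ := by
      refine small_bdd (a := b) ?_ hb
      intro x ⟨hx1, hx2⟩
      by_contra hxb
      simp only [Set.mem_Iio, not_lt] at hxb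
      exact hx2 ⟨hx1, hxb⟩
    have hs2 : scard (D n ∩ Set.Ici b) = Cardinal.lift.{1} μ :=
      large_diff Set.inter_subset_left (hDcard n) hsmall
    obtain ⟨γ₀, hγ₀, hcard⟩ := exists_chunk _ hs1 hs2 (μseq n) (hreg n).aleph0_le (hseqlt n)
    refine ⟨max γ₀ (max (b + 1) ((μseq n).ord + 1)), ?_, ?_, ?_, ?_⟩
    · refine lt_of_lt_of_le ?_ (le_max_of_le_right (le_max_left _ _))
      rw [Ordinal.add_one_eq_succ]; exact Order.lt_succ b
    · refine max_lt hγ₀ (max_lt ?_ ?_) <;> rw [Ordinal.add_one_eq_succ]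
      · exact hlim.succ_lt hb
      · exact hlim.succ_lt (hseqord n)
    · refine lt_of_lt_of_le ?_ (le_max_of_le_right (le_max_right _ _))
      rw [Ordinal.add_one_eq_succ]; exact Order.lt_succ _
    · refine le_trans hcard (scard_mono ?_)
      intro x ⟨⟨hxD, hxb⟩, hxγ⟩
      exact ⟨hxD, hxb, lt_of_lt_of_le hxγ (le_max_left _ _)⟩
  choose g hg1 hg2 hg3 hg4 using key
  set F : ℕ → {o : Ordinal // o < μ.ord} :=
    fun n => Nat.rec ⟨0, hΛ0⟩ (fun n p => ⟨g n p.1 p.2, hg2 n p.1 p.2⟩) n with hF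
  set β : ℕ → Ordinal := fun n => (F n).1 with hβ
  have hβ0 : β 0 = 0 := rfl
  have hβlt : ∀ n, β n < μ.ord := fun n => (F n).2
  have hβsucc : ∀ n, β n < β (n + 1) := fun n => hg1 n (β n) (F n).2
  have hβms : ∀ n, (μseq n).ord < β (n + 1) := fun n => hg3 n (β n) (F n).2
  have hβcard : ∀ n, Cardinal.lift.{1} (μseq n) ≤ scard (D n ∩ Set.Ico (β n) (β (n + 1))) :=
    fun n => hg4 n (β n) (F n).2
  have hβmono : StrictMono β := strictMono_nat_of_lt_succ hβsucc
  have hβunbdd : ∀ x < μ.ord, ∃ n, x < β n := by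
    intro x hx
    obtain ⟨n, hn⟩ := hcofseq x hx
    exact ⟨n + 1, hn.trans (hβms n)⟩
  -- the candidate set
  set q : Set Ordinal.{0} := ⋃ n, D n ∩ Set.Ico (β n) (β (n + 1)) with hq
  have hmemq : ∀ {x : Ordinal}, x ∈ q ↔ ∃ n, x ∈ D n ∧ β n ≤ x ∧ x < β (n + 1) := by
    intro x
    simp [hq, Set.mem_iUnion, Set.mem_inter_iff, Set.mem_Ico, and_assoc]
  have hqsub : q ⊆ Set.Iio μ.ord := by
    intro x hx
    obtain ⟨n, _, _, h3⟩ := hmemq.1 hx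
    exact h3.trans (hβlt (n + 1))
  set qb : Set Ordinal.{0} := q ∪ (accSet q ∩ Set.Iio μ.ord) with hqb
  have hqbsub : qb ⊆ Set.Iio μ.ord := by
    rintro x (hx | hx)
    · exact hqsub hx
    · exact hx.2
  have hqcard_ge : Cardinal.lift.{1} μ ≤ scard q := by
    rw [hsupeq, Cardinal.lift_iSup (Cardinal.bddAbove_range _)]
    refine ciSup_le fun n => le_trans (hβcard n) (scard_mono ?_)
    exact Set.subset_iUnion (fun n => D n ∩ Set.Ico (β n) (β (n + 1))) n
  have hIiocard : scard (Set.Iio μ.ord) = Cardinal.lift.{1} μ := by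
    show #(Set.Iio μ.ord) = _
    rw [Ordinal.mk_Iio_ordinal, Cardinal.card_ord]
  have hqcard : scard q = Cardinal.lift.{1} μ :=
    le_antisymm (hIiocard ▸ scard_mono hqsub) hqcard_ge
  have hqbcard : scard qb = Cardinal.lift.{1} μ :=
    le_antisymm (hIiocard ▸ scard_mono hqbsub)
      (le_trans hqcard_ge (scard_mono Set.subset_union_left))
  have hsupqb : sSup qb = μ.ord := sSup_eq hqbsub hqbcard
  -- accumulation points of q far out are in the qs
  have F7 : ∀ α, α ∈ accSet q → α < μ.ord → ∀ k, β (k + 1) < α → α ∈ qs k := by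
    intro α hacc hαμ k hk
    have hα0 : (0 : Ordinal) < α := accSet_pos hacc
    have hexN : ∃ N, α ≤ β N := by
      obtain ⟨N, hN⟩ := hβunbdd α hαμ
      exact ⟨N, hN.le⟩
    have hN : α ≤ β (Nat.find hexN) := Nat.find_spec hexN
    have hN0 : Nat.find hexN ≠ 0 := by
      intro h
      rw [h, hβ0] at hN
      exact absurd hN (not_le.2 hα0)
    obtain ⟨m, hm⟩ := Nat.exists_eq_succ_of_ne_zero hN0
    rw [hm] at hN
    have hβm : β m < α := by
      have := Nat.find_min hexN (m := m) (by omega)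
      push_neg at this
      exact this
    have hmk : k ≤ m := by
      have h1 : β (k + 1) < β (m + 1) := lt_of_lt_of_le hk hN
      have h2 : k + 1 < m + 1 := (hβmono.lt_iff_lt (a := k + 1) (b := m + 1)).1 h1
      omega
    have hmem : α ∈ D m := by
      apply hDacc m
      refine ⟨accSet_intro hα0 ?_, hαμ⟩
      intro y hy
      obtain ⟨x, hxq, hyx, hxα⟩ := accSet_elim hacc (max y (β m)) (max_lt hy hβm)
      obtain ⟨j, hxD, hxlo, hxhi⟩ := hmemq.1 hxq
      have hjm : j = m := by
        have h1 : β j < β (m + 1) := lt_of_le_of_lt hxlo (lt_of_lt_of_le hxα hN)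
        have h2 : β m < β (j + 1) := lt_of_le_of_lt (le_max_right y (β m)) (hyx.trans_le hxhi.le)
        have h3 := (hβmono.lt_iff_lt (a := j) (b := m + 1)).1 h1
        have h4 := (hβmono.lt_iff_lt (a := m) (b := j + 1)).1 h2
        omega
      exact ⟨x, hjm ▸ hxD, lt_of_le_of_lt (le_max_left y (β m)) hyx, hxα⟩
    exact hDsub m k hmk hmem
  -- the ordering
  have hcond : ∀ k, condLe μ qb (qs k) := by
    intro k
    have hsub : qb \ qs k ⊆ Set.Iio (β (k + 1) + 1) := by
      intro x ⟨hxqb, hxk⟩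
      rw [Set.mem_Iio, Ordinal.add_one_eq_succ]
      by_contra hge
      push_neg at hge
      have hgt : β (k + 1) < x := lt_of_lt_of_le (Order.lt_succ _) hge
      rcases hxqb with hxq | hxacc
      · obtain ⟨j, hxD, hxlo, hxhi⟩ := hmemq.1 hxq
        have h1 : β (k + 1) < β (j + 1) := hgt.trans hxhi
        have hkj : k ≤ j := by
          have h2 := (hβmono.lt_iff_lt (a := k + 1) (b := j + 1)).1 h1
          omega
        exact hxk (hDsub j k hkj hxD)
      · exact hxk (F7 x hxacc.1 hxacc.2 k hgt)
    refine small_bdd hsub ?_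
    rw [Ordinal.add_one_eq_succ]
    exact hlim.succ_lt (hβlt (k + 1))
  -- closedness of qb
  have haccqb : accSet qb ⊆ accSet q := by
    intro α hα
    apply accSet_intro (accSet_pos hα)
    intro y hy
    obtain ⟨x, hx, hyx, hxα⟩ := accSet_elim hα y hy
    rcases hx with h | h
    · exact ⟨x, h, hyx, hxα⟩
    · obtain ⟨z, hz, hyz, hzx⟩ := accSet_elim h.1 y hyx
      exact ⟨z, hz, hyz, hzx.trans hxα⟩
  have hclosed : IsClosedCond qb := by
    intro α hα
    rw [hsupqb] at hα
    exact Or.inr ⟨haccqb hα.1, hα.2⟩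
  exact ⟨qb, ⟨⟨hqbsub, hqbcard⟩, hclosed⟩, hcond⟩
end
end

section
/- Let μₙ be a strictly increasing sequence of infinite cardinals with supremum μ. For normal conditions q in the closed-set poset Q, let a(q) = {n : q ∩ [μₙ, μₙ₊₁) ≠ ∅}. If q₁ ≤ q₂ (i.e. |q₁ \ q₂| < μ) are normal conditions, then a(q₁) \ a(q₂) is finite. -/
open Cardinal Set

noncomputable section

/-- If  are normal conditions then  is finite. -/
theorem stmt_5 (μ : Cardinal.{0}) (μseq : ℕ → Cardinal.{0})
    (hmono : StrictMono μseq) (hinfs : ∀ n, Cardinal.aleph0 ≤ μseq n)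
    (hsup : μ = ⨆ n, μseq n)
    (q₁ q₂ : Set Ordinal.{0}) (hq₁ : InQ μ q₁) (hq₂ : InQ μ q₂)
    (hn₁ : IsNormalCond μseq q₁) (hn₂ : IsNormalCond μseq q₂)
    (hle : condLe μ q₁ q₂) :
    (aSet μseq q₁ \ aSet μseq q₂).Finite := by
  classical
  by_contra hinf
  obtain ⟨m, hmmono, hmrange, hotp⟩ := hn₁
  -- scard of q₁ ∩ interval (m k) is lift (μseq k) + 1 ≥ lift (μseq k)
  have key : ∀ k, Cardinal.lift.{1,0} (μseq k) ≤ scard (q₁ ∩ interval μseq (m k)) := by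
    intro k
    have h1 : scard (q₁ ∩ interval μseq (m k)) = (otp (q₁ ∩ interval μseq (m k))).card :=
      (Ordinal.card_type _).symm
    rw [h1, hotp k, ← Ordinal.lift_card]
    have h2 : (μseq k).ord ≤ (μseq k).ord + 1 := le_self_add
    have h3 : μseq k ≤ ((μseq k).ord + 1).card := by
      calc μseq k = ((μseq k).ord).card := (Cardinal.card_ord _).symm
        _ ≤ ((μseq k).ord + 1).card := Ordinal.card_le_card h2
    exact Cardinal.lift_le.mpr h3
  -- infinitely many k with m k in the difference
  have hS : {k | m k ∈ aSet μseq q₁ \ aSet μseq q₂}.Infinite := by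
    intro hfin
    apply hinf
    have himg : m '' {k | m k ∈ aSet μseq q₁ \ aSet μseq q₂}
        = aSet μseq q₁ \ aSet μseq q₂ := by
      apply Set.Subset.antisymm
      · rintro x ⟨k, hk, rfl⟩; exact hk
      · intro x hx
        have hx1 : x ∈ Set.range m := hmrange ▸ hx.1
        obtain ⟨k, rfl⟩ := hx1
        exact ⟨k, hx, rfl⟩
    exact himg ▸ hfin.image m
  -- hence for every K there is k ≥ K in that set
  have hunb : ∀ K, ∃ k, K ≤ k ∧ m k ∈ aSet μseq q₁ \ aSet μseq q₂ := by
    intro K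
    obtain ⟨k, hk, hkK⟩ := hS.exists_gt K
    exact ⟨k, le_of_lt hkK, hk⟩
  -- for such k, q₁ ∩ interval (m k) ⊆ q₁ \ q₂
  have hsub : ∀ k, m k ∉ aSet μseq q₂ →
      q₁ ∩ interval μseq (m k) ⊆ q₁ \ q₂ := by
    intro k hk x hx
    refine ⟨hx.1, fun hx2 => hk ⟨x, hx2, hx.2⟩⟩
  have hbig : ∀ K, Cardinal.lift.{1,0} (μseq K) ≤ scard (q₁ \ q₂) := by
    intro K
    obtain ⟨k, hKk, hk⟩ := hunb K
    calc Cardinal.lift.{1,0} (μseq K) ≤ Cardinal.lift.{1,0} (μseq k) :=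
          Cardinal.lift_le.mpr (hmono.monotone hKk)
      _ ≤ scard (q₁ ∩ interval μseq (m k)) := key k
      _ ≤ scard (q₁ \ q₂) := Cardinal.mk_le_mk_of_subset (hsub k hk.2)
  have hlift : Cardinal.lift.{1,0} μ ≤ scard (q₁ \ q₂) := by
    rw [hsup, Cardinal.lift_iSup (Cardinal.bddAbove_range _)]
    exact ciSup_le hbig
  exact absurd hle (not_lt.mpr hlift)
end
end

section
/- Let μ = supₙ μₙ with μₙ strictly increasing regular cardinals, and let q be a normal condition in Q with a(q) infinite. For every f ∈ ∏ₙ μₙ there exists a normal condition q' ≤ q such that either χ⁺_{q'}(n) < f(n) for all n ∈ a(q'), or f(n) < χ⁻_{q'}(n) for all n ∈ a(q'), where χ⁺_q(n) = sup(q ∩ [μₙ, μₙ₊₁)) and χ⁻_q(n) = min(q ∩ [μₙ, μₙ₊₁)) for n ∈ a(q). -/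
open Cardinal Set

noncomputable section

lemma otp_mono {s t : Set Ordinal.{0}} (h : s ⊆ t) : otp s ≤ otp t :=
  RelEmbedding.ordinal_type_le ⟨⟨Set.inclusion h, Set.inclusion_injective h⟩, Iff.rfl⟩

lemma otp_singleton (e : Ordinal.{0}) : otp {e} = 1 :=
  Ordinal.type_eq_one_of_unique _

lemma otp_split (t : Set Ordinal.{0}) (p : Ordinal.{0}) :
    otp t = otp (t ∩ Set.Iio p) + otp (t ∩ Set.Ici p) := by
  unfold otp
  rw [← Ordinal.type_sum_lex]
  refine Ordinal.type_eq.2 ⟨RelIso.mk (Equiv.mk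
      (fun x => if h : x.1 < p then Sum.inl ⟨x.1, x.2, h⟩ else Sum.inr ⟨x.1, x.2, not_lt.1 h⟩)
      (Sum.elim (fun a => ⟨a.1, a.2.1⟩) (fun a => ⟨a.1, a.2.1⟩)) ?_ ?_) ?_⟩
  · intro x
    by_cases h : x.1 < p <;> simp [h]
  · rintro (a | a)
    · have ha : a.1 < p := a.2.2
      simp [ha]
    · have ha : ¬ a.1 < p := not_lt.2 a.2.2
      simp [ha]
  · rintro ⟨a, ha⟩ ⟨b, hb⟩
    dsimp only [Equiv.coe_fn_mk]
    by_cases h1 : a < p <;> by_cases h2 : b < p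
    · rw [dif_pos h1, dif_pos h2]
      simp [Sum.lex_inl_inl, Subtype.mk_lt_mk]; exact Iff.rfl
    · rw [dif_pos h1, dif_neg h2]
      simp only [Sum.Lex.sep, true_iff, Subtype.mk_lt_mk]
      exact lt_of_lt_of_le h1 (not_lt.1 h2)
    · rw [dif_neg h1, dif_pos h2]
      simp only [Sum.lex_inr_inl, false_iff, Subtype.mk_lt_mk]
      exact fun hab => h1 (lt_trans hab h2)
    · rw [dif_neg h1, dif_neg h2]
      simp [Sum.lex_inr_inr, Subtype.mk_lt_mk]; exact Iff.rfl

lemma otp_top {t : Set Ordinal.{0}} {e : Ordinal.{0}} (he : e ∈ t) (htop : ∀ x ∈ t, x ≤ e) :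
    otp t = otp (t ∩ Set.Iio e) + 1 := by
  have h := otp_split t e
  have h2 : t ∩ Set.Ici e = {e} := by
    ext x
    constructor
    · rintro ⟨hx, hx2⟩
      exact le_antisymm (htop x hx) hx2
    · rintro rfl
      exact ⟨he, Set.mem_Ici.2 le_rfl⟩
  rwa [h2, otp_singleton] at h

lemma otp_typein (t : Set Ordinal.{0}) (E : t) :
    otp (t ∩ Set.Iio E.1) = Ordinal.typein ((· < ·) : t → t → Prop) E := by
  rw [← Ordinal.type_subrel]
  exact Ordinal.type_eq.2 ⟨RelIso.mk (Equiv.mk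
    (fun x => ⟨⟨x.1, x.2.1⟩, x.2.2⟩)
    (fun y => ⟨y.1.1, y.1.2, y.2⟩)
    (fun x => rfl) (fun y => rfl)) Iff.rfl⟩

lemma otp_extract (t : Set Ordinal.{0}) (β : Ordinal.{1}) (h : β + 1 ≤ otp t) :
    ∃ e ∈ t, otp (t ∩ Set.Iic e) = β + 1 := by
  have hβ : β < Ordinal.type ((· < ·) : t → t → Prop) := by
    refine lt_of_lt_of_le ?_ h
    rw [Ordinal.add_one_eq_succ]
    exact Order.lt_succ β
  set E := Ordinal.enum ((· < ·) : t → t → Prop) ⟨β, hβ⟩ with hE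
  refine ⟨E.1, E.2, ?_⟩
  have h1 : otp (t ∩ Set.Iic E.1) = otp (t ∩ Set.Iic E.1 ∩ Set.Iio E.1) + 1 :=
    otp_top ⟨E.2, Set.mem_Iic.2 le_rfl⟩ (fun x hx => hx.2)
  have h2 : t ∩ Set.Iic E.1 ∩ Set.Iio E.1 = t ∩ Set.Iio E.1 := by
    ext x
    exact ⟨fun hx => ⟨hx.1.1, hx.2⟩, fun hx => ⟨⟨hx.1, Set.mem_Iic.2 (le_of_lt hx.2)⟩, hx.2⟩⟩
  rw [h1, h2, otp_typein t E, hE, Ordinal.typein_enum]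

lemma otp_dichotomy (s : Set Ordinal.{0}) (p : Ordinal.{0}) (κ : Cardinal.{1}) (hκ : ℵ₀ ≤ κ)
    (hs : otp s = κ.ord + 1) :
    κ.ord ≤ otp (s ∩ Set.Iio p) ∨ κ.ord + 1 ≤ otp (s ∩ Set.Ioi p) := by
  by_contra hcon
  push_neg at hcon
  obtain ⟨hL, hH⟩ := hcon
  have hH' : otp (s ∩ Set.Ioi p) ≤ κ.ord := by
    rw [Ordinal.add_one_eq_succ] at hH
    exact Order.lt_succ_iff.1 hH
  have h1 := otp_split s p
  have h2 := otp_split (s ∩ Set.Ici p) (p + 1)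
  have e1 : s ∩ Set.Ici p ∩ Set.Iio (p + 1) ⊆ {p} := by
    rintro x ⟨⟨-, hx1⟩, hx2⟩
    have : x < p + 1 := hx2
    rw [Ordinal.add_one_eq_succ, Order.lt_succ_iff] at this
    exact le_antisymm this hx1
  have e2 : s ∩ Set.Ici p ∩ Set.Ici (p + 1) = s ∩ Set.Ioi p := by
    ext x
    constructor
    · rintro ⟨⟨hx, -⟩, hx2⟩
      refine ⟨hx, ?_⟩
      have : p + 1 ≤ x := hx2
      rw [Ordinal.add_one_eq_succ, Order.succ_le_iff] at this
      exact this
    · rintro ⟨hx, hx2⟩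
      have hlt : p < x := hx2
      exact ⟨⟨hx, le_of_lt hlt⟩, by
        show p + 1 ≤ x
        rw [Ordinal.add_one_eq_succ, Order.succ_le_iff]; exact hlt⟩
  have e1' : otp (s ∩ Set.Ici p ∩ Set.Iio (p + 1)) ≤ 1 :=
    le_trans (otp_mono e1) (otp_singleton p).le
  have hlim : Order.IsSuccLimit (Cardinal.ord κ) := Cardinal.isSuccLimit_ord hκ
  have habs : otp (s ∩ Set.Iio p) + Cardinal.ord κ ≤ Cardinal.ord κ := by
    rw [Ordinal.add_le_iff_of_isSuccLimit hlim]
    intro b' hb'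
    exact (Ordinal.isPrincipal_add_ord hκ hL hb').le
  have : κ.ord + 1 ≤ κ.ord := by
    calc κ.ord + 1 = otp s := hs.symm
    _ = otp (s ∩ Set.Iio p) + otp (s ∩ Set.Ici p) := h1
    _ = otp (s ∩ Set.Iio p) + (otp (s ∩ Set.Ici p ∩ Set.Iio (p+1)) + otp (s ∩ Set.Ici p ∩ Set.Ici (p+1))) := by rw [← h2]
    _ ≤ otp (s ∩ Set.Iio p) + (1 + κ.ord) := by
        refine add_le_add_right (add_le_add e1' ?_) _
        rw [e2]; exact hH'
    _ = otp (s ∩ Set.Iio p) + κ.ord := by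
        rw [Ordinal.one_add_of_omega0_le (Cardinal.omega0_le_ord.2 hκ)]
    _ ≤ κ.ord := habs
  rw [Ordinal.add_one_eq_succ, Order.succ_le_iff] at this
  exact lt_irrefl _ this

lemma master (μ : Cardinal.{0}) (hinf : Cardinal.aleph0 ≤ μ)
    (μseq : ℕ → Cardinal.{0}) (hmono : StrictMono μseq) (hreg : ∀ n, ℵ₀ ≤ μseq n)
    (hμ : μ = ⨆ n, μseq n)
    (q : Set Ordinal.{0}) (hqsub : q ⊆ Set.Iio μ.ord)
    (hqcard : scard q = Cardinal.lift.{1,0} μ) (hqcl : IsClosedCond q)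
    (b : ℕ → ℕ) (hb : StrictMono b)
    (T : ℕ → Set Ordinal.{0})
    (hTsub : ∀ j, T j ⊆ q ∩ interval μseq (b j))
    (hTotp : ∀ j, (Cardinal.lift.{1,0} (μseq j)).ord + 1 ≤ otp (T j))
    (hTmem : ∀ j α e y, α ∈ q → α ∈ interval μseq (b j) → e ∈ T j → α ≤ e →
      y ∈ T j → y < α → α ∈ T j) :
    ∃ q', InQ μ q' ∧ IsNormalCond μseq q' ∧ condLe μ q' q ∧
      ∀ n ∈ aSet μseq q', ∃ j, n = b j ∧ chiP μseq q' n ∈ T j ∧ chiM μseq q' n ∈ T j := by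
  have hext : ∀ j, ∃ e ∈ T j, otp (T j ∩ Set.Iic e) =
      (Cardinal.lift.{1,0} (μseq j)).ord + 1 := fun j => otp_extract _ _ (hTotp j)
  choose e he hotp using hext
  set P : ℕ → Set Ordinal.{0} := fun j => T j ∩ Set.Iic (e j) with hP
  set q' : Set Ordinal.{0} := ⋃ j, P j with hq'def
  have hPsub : ∀ j, P j ⊆ T j := fun j => inter_subset_left
  have hPq : ∀ j, P j ⊆ q := fun j x hx => (hTsub j (hx.1)).1
  have hPint : ∀ j, P j ⊆ interval μseq (b j) := fun j x hx => (hTsub j (hx.1)).2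
  have hPe : ∀ j, e j ∈ P j := fun j => ⟨he j, Set.mem_Iic.2 le_rfl⟩
  have hq'q : q' ⊆ q := iUnion_subset fun j => hPq j
  have hq'sub : q' ⊆ Set.Iio μ.ord := fun x hx => hqsub (hq'q hx)
  have hint : ∀ {n n' : ℕ} {x : Ordinal.{0}},
      x ∈ interval μseq n → x ∈ interval μseq n' → n = n' := by
    intro n n' x hx hx'
    rcases lt_trichotomy n n' with h | h | h
    · exact absurd (lt_of_lt_of_le hx.2 (le_trans
        (Cardinal.ord_le_ord.2 (hmono.monotone (Nat.succ_le_of_lt h))) hx'.1)) (lt_irrefl x)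
    · exact h
    · exact absurd (lt_of_lt_of_le hx'.2 (le_trans
        (Cardinal.ord_le_ord.2 (hmono.monotone (Nat.succ_le_of_lt h))) hx.1)) (lt_irrefl x)
  have hq'int : ∀ j, q' ∩ interval μseq (b j) = P j := by
    intro j
    ext x
    constructor
    · rintro ⟨hx, hxi⟩
      obtain ⟨j', hj'⟩ := mem_iUnion.1 hx
      have hbj : b j' = b j := hint (hPint j' hj') hxi
      rwa [hb.injective hbj] at hj'
    · intro hx
      exact ⟨mem_iUnion.2 ⟨j, hx⟩, hPint j hx⟩
  have haq' : aSet μseq q' = Set.range b := by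
    ext n
    constructor
    · rintro ⟨x, hx, hxi⟩
      obtain ⟨j, hj⟩ := mem_iUnion.1 hx
      exact ⟨j, hint (hPint j hj) hxi⟩
    · rintro ⟨j, rfl⟩
      exact ⟨e j, mem_iUnion.2 ⟨j, hPe j⟩, hPint j (hPe j)⟩
  -- cardinality
  have hcard_le : scard q' ≤ Cardinal.lift.{1,0} μ :=
    hqcard ▸ Cardinal.mk_le_mk_of_subset hq'q
  have hPcard : ∀ j, scard (P j) = Cardinal.lift.{1,0} (μseq j) := by
    intro j
    have h1 : (otp (P j)).card = Cardinal.lift.{1,0} (μseq j) := by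
      show (otp (T j ∩ Set.Iic (e j))).card = _
      rw [hotp j, Ordinal.add_one_eq_succ, Ordinal.card_succ, Cardinal.card_ord,
        Cardinal.add_one_eq (Cardinal.aleph0_le_lift.2 (hreg j))]
    rw [← h1]
    show Cardinal.mk _ = _
    unfold otp
    rw [Ordinal.card_type]
  have hcard_ge : Cardinal.lift.{1,0} μ ≤ scard q' := by
    rw [hμ, Cardinal.lift_iSup (Cardinal.bddAbove_range _)]
    refine ciSup_le fun j => ?_
    rw [← hPcard j]
    exact Cardinal.mk_le_mk_of_subset (fun x hx => mem_iUnion.2 ⟨j, hx⟩)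
  have hq'ne : q'.Nonempty := ⟨e 0, mem_iUnion.2 ⟨0, hPe 0⟩⟩
  -- closedness
  have hclosed : IsClosedCond q' := by
    rintro α ⟨⟨hne, hsup⟩, hlt⟩
    have hbdd : ∀ (s : Set Ordinal.{0}), BddAbove (s ∩ Set.Iio α) :=
      fun s => ⟨α, fun x hx => le_of_lt hx.2⟩
    have hαq : α ∈ q := by
      apply hqcl
      have hsub : q' ∩ Set.Iio α ⊆ q ∩ Set.Iio α := fun x hx => ⟨hq'q hx.1, hx.2⟩
      have h1 : α ≤ sSup (q ∩ Set.Iio α) :=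
        hsup.le.trans (csSup_le_csSup (hbdd q) hne hsub)
      have h2 : sSup (q ∩ Set.Iio α) ≤ α := csSup_le (hne.mono hsub) (fun x hx => le_of_lt hx.2)
      refine ⟨⟨hne.mono hsub, le_antisymm h1 h2⟩, ?_⟩
      have hss : sSup q' ≤ sSup q :=
        csSup_le_csSup ⟨μ.ord, fun x hx => le_of_lt (hqsub hx)⟩ hq'ne hq'q
      exact lt_of_lt_of_le hlt hss
    have hJ : ∃ J, α < (μseq (b J)).ord := by
      by_contra hcon
      push_neg at hcon
      have hcard : μ ≤ α.card := by
        rw [hμ]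
        refine ciSup_le fun n => ?_
        have h1 : (μseq n).ord ≤ α :=
          le_trans (Cardinal.ord_le_ord.2 (hmono.monotone hb.le_apply)) (hcon n)
        exact Cardinal.ord_le.1 h1
      have : α < μ.ord := by
        have hss : sSup q' ≤ μ.ord := csSup_le hq'ne (fun x hx => le_of_lt (hq'sub hx))
        exact lt_of_lt_of_le hlt hss
      exact absurd (Cardinal.ord_le.2 hcard) (not_le.2 this)
    obtain ⟨J, hJ⟩ := hJ
    have hhigh : ∀ j x, J ≤ j → x ∈ P j → ¬ x < α := by
      intro j x hj hx hxa
      have h1 : (μseq (b J)).ord ≤ (μseq (b j)).ord :=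
        Cardinal.ord_le_ord.2 (hmono.monotone (hb.monotone hj))
      exact absurd (lt_of_lt_of_le hxa (le_trans hJ.le (le_trans h1 (hPint j hx).1)))
        (lt_irrefl x)
    set S : Set ℕ := {j | j < J ∧ (P j ∩ Set.Iio α).Nonempty} with hS
    have hSne : S.Nonempty := by
      obtain ⟨x, hx, hxa⟩ := hne
      obtain ⟨j, hj⟩ := mem_iUnion.1 hx
      have hjJ : j < J := by
        by_contra hcon
        exact hhigh j x (not_lt.1 hcon) hj hxa
      exact ⟨j, hjJ, ⟨x, hj, hxa⟩⟩
    have hSbdd : BddAbove S := ⟨J, fun j hj => le_of_lt hj.1⟩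
    set j₀ := sSup S with hj₀
    have hj₀S : j₀ ∈ S := Nat.sSup_mem hSne hSbdd
    obtain ⟨hj₀J, y, hyP, hyα⟩ := hj₀S
    have hyα' : y < α := hyα
    have hle1 : α ≤ sSup (P j₀ ∩ Set.Iio α) := by
      refine hsup.le.trans (csSup_le hne fun x hx => ?_)
      obtain ⟨j, hj⟩ := mem_iUnion.1 hx.1
      have hjJ : j < J := by
        by_contra hcon
        exact hhigh j x (not_lt.1 hcon) hj hx.2
      have hjj₀ : j ≤ j₀ := le_csSup hSbdd ⟨hjJ, ⟨x, hj, hx.2⟩⟩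
      rcases eq_or_lt_of_le hjj₀ with rfl | hlt'
      · exact le_csSup (hbdd _) ⟨hj, hx.2⟩
      · have h1 : x < (μseq (b j + 1)).ord := (hPint j hj).2
        have h2 : (μseq (b j + 1)).ord ≤ (μseq (b j₀)).ord :=
          Cardinal.ord_le_ord.2 (hmono.monotone (Nat.succ_le_of_lt (hb hlt')))
        have h3 : (μseq (b j₀)).ord ≤ y := (hPint j₀ hyP).1
        exact le_trans (le_of_lt (lt_of_lt_of_le h1 (le_trans h2 h3)))
          (le_csSup (hbdd _) ⟨hyP, hyα⟩)
    have hle2 : sSup (P j₀ ∩ Set.Iio α) ≤ α :=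
      csSup_le ⟨y, hyP, hyα⟩ fun x hx => le_of_lt hx.2
    have hα' : α = sSup (P j₀ ∩ Set.Iio α) := le_antisymm hle1 hle2
    have hαe : α ≤ e j₀ := by
      rw [hα']
      exact csSup_le ⟨y, hyP, hyα⟩ fun x hx => hx.1.2
    have hαint : α ∈ interval μseq (b j₀) := by
      constructor
      · exact le_trans (hPint j₀ hyP).1 (le_of_lt hyα')
      · exact lt_of_le_of_lt hαe (hPint j₀ (hPe j₀)).2
    have hαT : α ∈ T j₀ :=
      hTmem j₀ α (e j₀) y hαq hαint (he j₀) hαe (hPsub j₀ hyP) hyα'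
    exact mem_iUnion.2 ⟨j₀, hαT, Set.mem_Iic.2 hαe⟩
  have hcond : condLe μ q' q := by
    unfold condLe
    have hd : q' \ q = ∅ := Set.diff_eq_empty.2 hq'q
    rw [hd]
    show Cardinal.mk _ < _
    rw [Cardinal.mk_emptyCollection]
    exact lt_of_lt_of_le Cardinal.aleph0_pos
      (le_trans (Cardinal.aleph0_le_lift.2 hinf) le_rfl)
  refine ⟨q', ⟨⟨hq'sub, le_antisymm hcard_le hcard_ge⟩, hclosed⟩,
    ⟨b, hb, haq'.symm, ?_⟩, hcond, ?_⟩
  · intro j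
    rw [hq'int j]
    show otp (T j ∩ Set.Iic (e j)) = _
    rw [hotp j, Ordinal.lift_add, Ordinal.lift_one, Cardinal.lift_ord]
  · intro n hn
    rw [haq'] at hn
    obtain ⟨j, rfl⟩ := hn
    refine ⟨j, rfl, ?_, ?_⟩
    · unfold chiP
      rw [hq'int j]
      have h1 : sSup (P j) = e j := le_antisymm
        (csSup_le ⟨e j, hPe j⟩ fun x hx => hx.2)
        (le_csSup ⟨e j, fun x hx => hx.2⟩ (hPe j))
      rw [h1]
      exact he j
    · unfold chiM
      rw [hq'int j]
      exact (csInf_mem ⟨e j, hPe j⟩).1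

/-- For every  and every normal  there is a normal
 with either  for all , or
 for all . -/
theorem stmt_7 (μ : Cardinal.{0}) (hinf : Cardinal.aleph0 < μ)
    (hcof : μ.ord.cof = Cardinal.aleph0)
    (μseq : ℕ → Cardinal.{0}) (hseq : GoodSeq μ μseq)
    (q : Set Ordinal.{0}) (hq : InQ μ q) (hn : IsNormalCond μseq q)
    (hainf : (aSet μseq q).Infinite)
    (hchi : ∀ n ∈ aSet μseq q, chiP μseq q n < (μseq (n+1)).ord)
    (f : ℕ → Ordinal.{0}) (hf : ∀ n, f n < (μseq (n+1)).ord) :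
    ∃ q' : Set Ordinal.{0}, InQ μ q' ∧ IsNormalCond μseq q' ∧ condLe μ q' q ∧
      ((∀ n ∈ aSet μseq q', chiP μseq q' n < f n) ∨
       (∀ n ∈ aSet μseq q', f n < chiM μseq q' n)) := by
  obtain ⟨hmono, hreg, hμ⟩ := hseq
  obtain ⟨m, hm, hmr, hmo⟩ := hn
  have hreg' : ∀ n, ℵ₀ ≤ μseq n := fun n => (hreg n).1
  have hso : ∀ i, otp (q ∩ interval μseq (m i)) = (Cardinal.lift.{1,0} (μseq i)).ord + 1 := by
    intro i
    rw [hmo i, Ordinal.lift_add, Ordinal.lift_one, Cardinal.lift_ord]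
  have hdich : ∀ i, (Cardinal.lift.{1,0} (μseq i)).ord ≤
        otp (q ∩ interval μseq (m i) ∩ Set.Iio (f (m i))) ∨
      (Cardinal.lift.{1,0} (μseq i)).ord + 1 ≤
        otp (q ∩ interval μseq (m i) ∩ Set.Ioi (f (m i))) :=
    fun i => otp_dichotomy _ _ _ (Cardinal.aleph0_le_lift.2 (hreg' i)) (hso i)
  have hmord : ∀ {a c : ℕ}, a ≤ c →
      (Cardinal.lift.{1,0} (μseq a)).ord ≤ (Cardinal.lift.{1,0} (μseq c)).ord :=
    fun h => Cardinal.ord_le_ord.2 (Cardinal.lift_le.2 (hmono.monotone h))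
  set Low : Set ℕ := {i | (Cardinal.lift.{1,0} (μseq i)).ord ≤
    otp (q ∩ interval μseq (m i) ∩ Set.Iio (f (m i)))} with hLowdef
  by_cases hLow : Low.Infinite
  · set k : ℕ → ℕ := fun j => Nat.nth (· ∈ Low) (j + 1) with hk
    have hkmem : ∀ j, k j ∈ Low := fun j => Nat.nth_mem_of_infinite hLow _
    have hkmono : StrictMono k :=
      fun a c hac => (Nat.nth_lt_nth hLow).2 (by omega)
    have hkge : ∀ j, j + 1 ≤ k j := fun j => (Nat.nth_strictMono hLow).le_apply
    obtain ⟨q', hInQ, hNorm, hle, hchi'⟩ := master μ hinf.le μseq hmono hreg' hμ q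
      hq.1.1 hq.1.2 hq.2 (fun j => m (k j)) (hm.comp hkmono)
      (fun j => q ∩ interval μseq (m (k j)) ∩ Set.Iio (f (m (k j))))
      (fun j => inter_subset_left)
      (fun j => by
        have h1 : (Cardinal.lift.{1,0} (μseq j)).ord + 1 ≤
            (Cardinal.lift.{1,0} (μseq (j+1))).ord := by
          rw [Ordinal.add_one_eq_succ, Order.succ_le_iff]
          exact Cardinal.ord_lt_ord.2 (Cardinal.lift_lt.2 (hmono (Nat.lt_succ_self j)))
        exact le_trans (le_trans h1 (hmord (hkge j))) (hkmem j))
      (fun j α e y hαq hαint heT hαe hyT hyα =>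
        ⟨⟨hαq, hαint⟩, lt_of_le_of_lt hαe heT.2⟩)
    refine ⟨q', hInQ, hNorm, hle, Or.inl ?_⟩
    intro n hn
    obtain ⟨j, rfl, hcp, -⟩ := hchi' n hn
    exact hcp.2
  · have hHigh : (Set.compl Low).Infinite := (Set.not_infinite.1 hLow).infinite_compl
    set k : ℕ → ℕ := fun j => Nat.nth (· ∈ Lowᶜ) (j + 1) with hk
    have hkmem : ∀ j, k j ∈ Lowᶜ := fun j => Nat.nth_mem_of_infinite hHigh _
    have hkmono : StrictMono k :=
      fun a c hac => (Nat.nth_lt_nth hHigh).2 (by omega)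
    have hkge : ∀ j, j + 1 ≤ k j := fun j => (Nat.nth_strictMono hHigh).le_apply
    obtain ⟨q', hInQ, hNorm, hle, hchi'⟩ := master μ hinf.le μseq hmono hreg' hμ q
      hq.1.1 hq.1.2 hq.2 (fun j => m (k j)) (hm.comp hkmono)
      (fun j => q ∩ interval μseq (m (k j)) ∩ Set.Ioi (f (m (k j))))
      (fun j => inter_subset_left)
      (fun j => by
        have h2 := (hdich (k j)).resolve_left (hkmem j)
        refine le_trans ?_ h2
        exact add_le_add_left (hmord (le_trans (Nat.le_succ j) (hkge j))) 1)
      (fun j α e y hαq hαint heT hαe hyT hyα =>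
        ⟨⟨hαq, hαint⟩, lt_trans hyT.2 hyα⟩)
    refine ⟨q', hInQ, hNorm, hle, Or.inr ?_⟩
    intro n hn
    obtain ⟨j, rfl, -, hcm⟩ := hchi' n hn
    exact hcm.2
end
end

section
/- (Club guessing) If κ and λ are regular cardinals with κ⁺ < λ, then there exists a sequence ⟨c_δ : δ < λ, cf(δ) = κ⟩ such that each c_δ is a closed unbounded subset of δ of order type κ, and for every closed unbounded E ⊆ λ there exists δ < λ with cf(δ) = κ and c_δ ⊆ E. -/
open Cardinal Set

noncomputable section

/-- `c` is a club subset of `δ`: `c ⊆ δ`, unbounded in `δ`, and closed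
(contains its accumulation points below `δ`). -/
def IsClubIn (c : Set Ordinal.{0}) (δ : Ordinal.{0}) : Prop :=
  c ⊆ Set.Iio δ ∧ (∀ α < δ, ∃ β ∈ c, α < β) ∧ accSet c ∩ Set.Iio δ ⊆ c

namespace CG
open Ordinal

lemma bddAbove_inter_Iio (p : Set Ordinal.{0}) (a : Ordinal.{0}) :
    BddAbove (p ∩ Iio a) := ⟨a, fun _ hx => hx.2.le⟩

lemma bddAbove_of_subset_Iio {s : Set Ordinal.{0}} {a : Ordinal.{0}} (h : s ⊆ Iio a) :
    BddAbove s := ⟨a, fun _ hx => (h hx).le⟩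

/-- H1: an unbounded subset of `Iio δ` has cardinality at least `cof δ`. -/
lemma lift_cof_le_scard {δ : Ordinal.{0}} {A : Set Ordinal.{0}} (hA : A ⊆ Iio δ)
    (hu : ∀ α < δ, ∃ β ∈ A, α < β) : Cardinal.lift.{1} δ.cof ≤ scard A := by
  classical
  let e := Ordinal.ToType.mk (o := δ)
  set A' : Set δ.ToType := {y | (e.symm y : Ordinal) ∈ A} with hA'
  have hEq : A ≃ A' := by
    refine ⟨fun x => ⟨e ⟨x.1, hA x.2⟩, ?_⟩, fun y => ⟨(e.symm y.1 : Ordinal), y.2⟩, ?_, ?_⟩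
    · simp [hA']
    · intro x; ext; simp
    · intro y; ext; simp
  have hcof : δ.cof ≤ #A' := by
    have hlsub : Ordinal.lsub (fun y : A' => (e.symm y.1 : Ordinal)) = δ := by
      apply le_antisymm
      · exact Ordinal.lsub_le fun y => (e.symm y.1).2
      · refine le_of_forall_lt fun α hα => ?_
        obtain ⟨β, hβA, hβ⟩ := hu α hα
        have : β = (e.symm (e ⟨β, hA hβA⟩) : Ordinal) := by simp
        calc α < β := hβ
        _ = (e.symm (e ⟨β, hA hβA⟩) : Ordinal) := this
        _ < _ := Ordinal.lt_lsub (fun y : A' => (e.symm y.1 : Ordinal)) ⟨e ⟨β, hA hβA⟩, by simp [hA', hβA]⟩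
    calc δ.cof = (Ordinal.lsub (fun y : A' => (e.symm y.1 : Ordinal))).cof := by rw [hlsub]
    _ ≤ #A' := Ordinal.cof_lsub_le _
  have : scard A = Cardinal.lift.{1} #A' := by
    have := Cardinal.lift_mk_eq'.{1,0}.mpr ⟨hEq⟩
    rwa [Cardinal.lift_id'.{0,1}] at this
  rw [this]
  exact Cardinal.lift_le.2 hcof

/-- H2: a set of fewer than `cof θ` ordinals below `θ` has `sSup` below `θ`. -/
lemma sSup_lt_of_scard {θ : Ordinal.{0}} {s : Set Ordinal.{0}} (hs : s ⊆ Iio θ)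
    (hcard : scard s < Cardinal.lift.{1} θ.cof) : sSup s < θ := by
  have hθ : θ ≠ 0 := by
    rintro rfl
    simp [Ordinal.cof_zero] at hcard
  rcases s.eq_empty_or_nonempty with rfl | hne
  · rw [csSup_empty]; exact pos_iff_ne_zero.2 hθ
  · have hle : sSup s ≤ θ := csSup_le hne fun x hx => (hs hx).le
    rcases lt_or_eq_of_le hle with h | h
    · exact h
    · exfalso
      have hu : ∀ α < θ, ∃ β ∈ s, α < β := by
        intro α hα
        obtain ⟨β, hβ, hβ'⟩ := exists_lt_of_lt_csSup hne (h ▸ hα)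
        exact ⟨β, hβ, hβ'⟩
      exact hcard.not_ge (lift_cof_le_scard hs hu)

/-- `otp` is monotone under inclusion. -/
lemma otp_mono {S T : Set Ordinal.{0}} (h : T ⊆ S) : otp T ≤ otp S := by
  refine RelEmbedding.ordinal_type_le ⟨⟨Set.inclusion h, Set.inclusion_injective h⟩, ?_⟩
  intro a b
  exact Iff.rfl

lemma ord_scard_le_otp (S : Set Ordinal.{0}) : (scard S).ord ≤ otp S := by
  have h : (otp S).card = scard S := Ordinal.card_type _
  calc (scard S).ord = (otp S).card.ord := by rw [h]
    _ ≤ otp S := Cardinal.ord_card_le _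

lemma otp_Iio (θ : Ordinal.{0}) : otp (Iio θ) = Ordinal.lift.{1} θ :=
  Ordinal.typein_ordinal θ

lemma typein_segment {T : Set Ordinal.{0}} {x} (hx : x ∈ T) :
    (Ordinal.typein ((· < ·) : T → T → Prop) ⟨x, hx⟩).card = scard (T ∩ Iio x) := by
  rw [Ordinal.card_typein]
  exact Cardinal.mk_congr ⟨fun y => ⟨y.1.1, y.1.2, y.2⟩, fun z => ⟨⟨z.1, z.2.1⟩, z.2.2⟩,
    fun _ => rfl, fun _ => rfl⟩

lemma scard_segment_lt {T : Set Ordinal.{0}} {κ : Cardinal.{0}}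
    (hT : otp T = Ordinal.lift.{1} κ.ord) {x} (hx : x ∈ T) :
    scard (T ∩ Iio x) < Cardinal.lift.{1} κ := by
  have h1 : Ordinal.typein ((· < ·) : T → T → Prop) ⟨x, hx⟩ < otp T :=
    Ordinal.typein_lt_type _ _
  rw [hT, Cardinal.lift_ord] at h1
  have h2 := Cardinal.lt_ord.mp h1
  rwa [typein_segment hx] at h2

lemma otp_le_of_segments {T : Set Ordinal.{0}} {κ : Cardinal.{0}}
    (h : ∀ x, x ∈ T → scard (T ∩ Iio x) < Cardinal.lift.{1} κ) :
    otp T ≤ Ordinal.lift.{1} κ.ord := by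
  by_contra hlt
  push_neg at hlt
  obtain ⟨x, hx⟩ := Ordinal.typein_surj ((· < ·) : T → T → Prop) hlt
  have hcard : (Ordinal.typein ((· < ·) : T → T → Prop) x).card = Cardinal.lift.{1} κ := by
    rw [hx, Cardinal.lift_ord]
    simp [Cardinal.card_ord]
  obtain ⟨x, hxT⟩ := x
  rw [typein_segment hxT] at hcard
  exact (h x hxT).ne hcard

/-- order type of the image of `Iio θ` under a strictly monotone map. -/
lemma otp_image_Iio {v : Ordinal.{0} → Ordinal.{0}} {θ : Ordinal.{0}}
    (hv : ∀ a < θ, ∀ b < θ, a < b → v a < v b) :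
    otp (v '' Iio θ) = Ordinal.lift.{1} θ := by
  rw [← otp_Iio θ]
  have hinj : Set.InjOn v (Iio θ) := by
    intro a ha b hb hab
    rcases lt_trichotomy a b with h | h | h
    · exact absurd hab (hv a ha b hb h).ne
    · exact h
    · exact absurd hab.symm (hv b hb a ha h).ne
  refine (RelIso.ordinal_type_eq ⟨Equiv.Set.imageOfInjOn v (Iio θ) hinj, ?_⟩).symm
  rintro ⟨a, ha⟩ ⟨b, hb⟩
  simp only [Equiv.Set.imageOfInjOn, Equiv.coe_fn_mk, Subtype.mk_lt_mk]
  constructor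
  · intro hlt
    rcases lt_trichotomy a b with h | h | h
    · exact h
    · subst h; exact absurd hlt (lt_irrefl _)
    · exact absurd (hv b hb a ha h) (asymm hlt)
  · intro hlt
    exact hv a ha b hb hlt

lemma mem_accSet_iff {p : Set Ordinal.{0}} {α : Ordinal.{0}} :
    α ∈ accSet p ↔ (p ∩ Iio α).Nonempty ∧ ∀ γ < α, ∃ β ∈ p, γ < β ∧ β < α := by
  constructor
  · rintro ⟨hne, hsup⟩
    refine ⟨hne, fun γ hγ => ?_⟩
    obtain ⟨β, hβ, hβ'⟩ := exists_lt_of_lt_csSup hne (hsup ▸ hγ)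
    exact ⟨β, hβ.1, hβ', hβ.2⟩
  · rintro ⟨hne, hub⟩
    refine ⟨hne, le_antisymm ?_ (csSup_le hne fun x hx => hx.2.le)⟩
    refine le_of_forall_lt fun γ hγ => ?_
    obtain ⟨β, hβ, h1, h2⟩ := hub γ hγ
    exact h1.trans_le (le_csSup (bddAbove_inter_Iio p α) ⟨hβ, h2⟩)

lemma accSet_mono {p q : Set Ordinal.{0}} (h : p ⊆ q) : accSet p ⊆ accSet q := by
  intro α hα
  rw [mem_accSet_iff] at hα ⊢
  obtain ⟨hne, hub⟩ := hα
  refine ⟨hne.mono (Set.inter_subset_inter_left _ h), fun γ hγ => ?_⟩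
  obtain ⟨β, hβ, h1, h2⟩ := hub γ hγ
  exact ⟨β, h hβ, h1, h2⟩

lemma sSup_mem_closed {D : Set Ordinal.{0}} {θ : Ordinal.{0}} (hD : IsClubIn D θ)
    {s : Set Ordinal.{0}} (hs : s ⊆ D) (hne : s.Nonempty) (hlt : sSup s < θ) :
    sSup s ∈ D := by
  by_cases h : sSup s ∈ s
  · exact hs h
  · apply hD.2.2
    refine ⟨?_, hlt⟩
    have hbd : BddAbove s := bddAbove_of_subset_Iio fun x hx => hD.1 (hs hx)
    have hsub : s ⊆ D ∩ Iio (sSup s) := fun x hx =>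
      ⟨hs hx, lt_of_le_of_ne (le_csSup hbd hx) fun he => h (he ▸ hx)⟩
    rw [mem_accSet_iff]
    refine ⟨hne.mono hsub, fun γ hγ => ?_⟩
    obtain ⟨β, hβ, hβ'⟩ := exists_lt_of_lt_csSup hne hγ
    exact ⟨β, (hsub hβ).1, hβ', (hsub hβ).2⟩

/-- closure below `δ` -/
def clo (S : Set Ordinal.{0}) (δ : Ordinal.{0}) : Set Ordinal.{0} :=
  {α | α < δ ∧ (α ∈ S ∨ α ∈ accSet S)}

lemma subset_clo {S : Set Ordinal.{0}} {δ : Ordinal.{0}} (hS : S ⊆ Iio δ) : S ⊆ clo S δ :=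
  fun x hx => ⟨hS hx, Or.inl hx⟩

lemma clo_isClubIn {S : Set Ordinal.{0}} {δ : Ordinal.{0}} (hS : S ⊆ Iio δ)
    (hu : ∀ α < δ, ∃ β ∈ S, α < β) : IsClubIn (clo S δ) δ := by
  refine ⟨fun x hx => hx.1, ?_, ?_⟩
  · intro α hα
    obtain ⟨β, hβ, h⟩ := hu α hα
    exact ⟨β, ⟨hS hβ, Or.inl hβ⟩, h⟩
  · rintro α ⟨hacc, hαδ⟩
    refine ⟨hαδ, Or.inr ?_⟩
    rw [mem_accSet_iff] at hacc ⊢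
    obtain ⟨hne, hub⟩ := hacc
    constructor
    · obtain ⟨β, hβ⟩ := hne
      rcases hβ.1.2 with h | h
      · exact ⟨β, h, hβ.2⟩
      · obtain ⟨⟨γ, hγ⟩, _⟩ := mem_accSet_iff.mp h
        exact ⟨γ, hγ.1, show γ < α from hγ.2.trans hβ.2⟩
    · intro γ hγ
      obtain ⟨β, hβclo, hγβ, hβα⟩ := hub γ hγ
      rcases hβclo.2 with h | h
      · exact ⟨β, h, hγβ, hβα⟩
      · obtain ⟨_, hub2⟩ := mem_accSet_iff.mp h
        obtain ⟨β', hβ'S, h1, h2⟩ := hub2 γ hγβ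
        exact ⟨β', hβ'S, h1, h2.trans hβα⟩

lemma clo_subset_closed {S T : Set Ordinal.{0}} {δ θ : Ordinal.{0}} (hST : S ⊆ T) (hδθ : δ ≤ θ)
    (hT : accSet T ∩ Iio θ ⊆ T) : clo S δ ⊆ T := by
  rintro α ⟨hαδ, h | h⟩
  · exact hST h
  · exact hT ⟨accSet_mono hST h, hαδ.trans_le hδθ⟩


/-- every infinite set of ordinals contains a strictly increasing `ω`-chain -/
lemma exists_nat_chain {T : Set Ordinal.{0}} (hT : T.Infinite) :
    ∃ g : ℕ → Ordinal.{0}, StrictMono g ∧ ∀ n, g n ∈ T := by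
  classical
  let g : ℕ → Ordinal.{0} := fun n => Nat.rec (sInf T) (fun _ x => sInf (T \ Iic x)) n
  have key : ∀ n, g n ∈ T ∧ (T ∩ Iic (g n)).Finite := by
    intro n
    induction n with
    | zero =>
      refine ⟨csInf_mem hT.nonempty, (Set.finite_singleton (g 0)).subset ?_⟩
      rintro x ⟨hx1, hx2⟩
      exact le_antisymm hx2 (csInf_le' hx1)
    | succ n ih =>
      have hne : (T \ Iic (g n)).Nonempty := by
        rcases Set.eq_empty_or_nonempty (T \ Iic (g n)) with h | h
        · exact absurd (ih.2.subset fun x hx => ⟨hx, Set.diff_eq_empty.mp h hx⟩) hT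
        · exact h
      have hmem : g (n+1) ∈ T \ Iic (g n) := csInf_mem hne
      refine ⟨hmem.1, (ih.2.union (Set.finite_singleton (g (n+1)))).subset ?_⟩
      rintro x ⟨hx1, hx2⟩
      rcases le_or_gt x (g n) with hle | hgt
      · exact Or.inl ⟨hx1, hle⟩
      · have h1 : g (n+1) ≤ x := csInf_le' ⟨hx1, not_le.mpr hgt⟩
        exact Or.inr (le_antisymm hx2 h1 ▸ rfl)
  have hlt : ∀ n, g n < g (n+1) := by
    intro n
    have hne : (T \ Iic (g n)).Nonempty := by
      rcases Set.eq_empty_or_nonempty (T \ Iic (g n)) with h | h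
      · exact absurd ((key n).2.subset fun x hx => ⟨hx, Set.diff_eq_empty.mp h hx⟩) hT
      · exact h
    exact lt_of_not_ge (csInf_mem hne).2
  exact ⟨g, strictMono_nat_of_lt_succ hlt, fun n => (key n).1⟩

/-- intersection of fewer than `cof θ` clubs in `θ` is a club in `θ` -/
lemma inter_clubs {θ : Ordinal.{0}} (hθ : ℵ₀ < θ.cof) {i₀ : Ordinal.{0}}
    (hi : Cardinal.lift.{1} i₀.card < Cardinal.lift.{1} θ.cof)
    {C : Ordinal.{0} → Set Ordinal.{0}} (hC : ∀ j < i₀, IsClubIn (C j) θ) :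
    IsClubIn (Iio θ ∩ {x | ∀ j < i₀, x ∈ C j}) θ := by
  have hlim : Order.IsSuccLimit θ := Ordinal.aleph0_le_cof.mp hθ.le
  refine ⟨fun x hx => hx.1, ?_, ?_⟩
  · -- unbounded
    intro α hα
    set nxt : Ordinal.{0} → Ordinal.{0} → Ordinal.{0} := fun j b => sInf (C j ∩ Ioi b) with hnxt
    have hnxt_spec : ∀ j, j < i₀ → ∀ b, b < θ → nxt j b ∈ C j ∧ b < nxt j b ∧ nxt j b < θ := by
      intro j hj b hb
      have hne : (C j ∩ Ioi b).Nonempty := by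
        obtain ⟨β, hβ, h⟩ := (hC j hj).2.1 b hb
        exact ⟨β, hβ, h⟩
      have hmem := csInf_mem hne
      exact ⟨hmem.1, hmem.2, (hC j hj).1 hmem.1⟩
    set bseq : ℕ → Ordinal.{0} :=
      fun n => Nat.rec (α + 1)
        (fun _ b => max (b + 1) (sSup ((fun j => nxt j b) '' Iio i₀))) n with hbseq
    have hsucc : ∀ n, bseq (n+1) = max (bseq n + 1) (sSup ((fun j => nxt j (bseq n)) '' Iio i₀)) :=
      fun n => rfl
    have hself : ∀ b : Ordinal.{0}, b < b + 1 := fun b => by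
      rw [Ordinal.add_one_eq_succ]; exact Order.lt_succ b
    have hbθ : ∀ n, bseq n < θ := by
      intro n
      induction n with
      | zero =>
        show α + 1 < θ
        rw [Ordinal.add_one_eq_succ]
        exact hlim.succ_lt hα
      | succ n ih =>
        rw [hsucc]
        refine max_lt ?_ ?_
        · rw [Ordinal.add_one_eq_succ]; exact hlim.succ_lt ih
        · refine sSup_lt_of_scard ?_ ?_
          · rintro x ⟨j, hj, rfl⟩
            exact (hnxt_spec j hj (bseq n) ih).2.2
          · calc scard ((fun j => nxt j (bseq n)) '' Iio i₀)
                ≤ scard (Iio i₀) := Cardinal.mk_image_le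
              _ = Cardinal.lift.{1} i₀.card := Ordinal.mk_Iio_ordinal i₀
              _ < _ := hi
    have hbmono : ∀ n, bseq n < bseq (n+1) := by
      intro n
      rw [hsucc]
      exact lt_of_lt_of_le (hself (bseq n)) (le_max_left _ _)
    have hnxt_le : ∀ n j, j < i₀ → nxt j (bseq n) ≤ bseq (n+1) := by
      intro n j hj
      rw [hsucc]
      refine le_max_of_le_right (le_csSup ?_ ⟨j, hj, rfl⟩)
      refine bddAbove_of_subset_Iio (a := θ) ?_
      rintro x ⟨j', hj', rfl⟩
      exact (hnxt_spec j' hj' (bseq n) (hbθ n)).2.2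
    have hrbdd : BddAbove (Set.range bseq) := Ordinal.bddAbove_range bseq
    set β : Ordinal.{0} := sSup (Set.range bseq) with hβdef
    have hblt : ∀ n, bseq n < β := by
      intro n
      calc bseq n < bseq (n+1) := hbmono n
        _ ≤ β := le_csSup hrbdd ⟨n+1, rfl⟩
    have hβθ : β < θ := by
      refine sSup_lt_of_scard ?_ ?_
      · rintro x ⟨n, rfl⟩; exact hbθ n
      · have h := Cardinal.mk_range_le_lift (f := bseq)
        rw [Cardinal.lift_id'.{0,1}] at h
        calc scard (Set.range bseq) ≤ Cardinal.lift.{1} #ℕ := h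
          _ = Cardinal.lift.{1} ℵ₀ := by rw [Cardinal.mk_nat]
          _ < Cardinal.lift.{1} θ.cof := Cardinal.lift_lt.2 hθ
    have hβmem : ∀ j, j < i₀ → β ∈ C j := by
      intro j hj
      refine (hC j hj).2.2 ⟨?_, hβθ⟩
      rw [mem_accSet_iff]
      constructor
      · refine ⟨nxt j (bseq 0), (hnxt_spec j hj (bseq 0) (hbθ 0)).1, ?_⟩
        exact lt_of_le_of_lt (hnxt_le 0 j hj) (hblt 1)
      · intro γ hγ
        obtain ⟨x, ⟨n, rfl⟩, hx⟩ := exists_lt_of_lt_csSup (Set.range_nonempty bseq) hγ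
        refine ⟨nxt j (bseq n), (hnxt_spec j hj (bseq n) (hbθ n)).1, ?_, ?_⟩
        · exact hx.trans (hnxt_spec j hj (bseq n) (hbθ n)).2.1
        · exact lt_of_le_of_lt (hnxt_le n j hj) (hblt (n+1))
    refine ⟨β, ⟨hβθ, fun j hj => hβmem j hj⟩, ?_⟩
    exact lt_of_lt_of_le (hself α) (hblt 0).le
  · -- closed
    rintro α ⟨hacc, hαθ⟩
    refine ⟨hαθ, fun j hj => (hC j hj).2.2 ⟨?_, hαθ⟩⟩
    rw [mem_accSet_iff] at hacc ⊢
    obtain ⟨hne, hub⟩ := hacc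
    constructor
    · obtain ⟨x, hx⟩ := hne
      exact ⟨x, hx.1.2 j hj, hx.2⟩
    · intro γ hγ
      obtain ⟨x, hxmem, h1, h2⟩ := hub γ hγ
      exact ⟨x, hxmem.2 j hj, h1, h2⟩

/-- transfinite recursion: `recSup step i = sup of step j (recSup step j), j < i`. -/
def recSup (step : Ordinal.{0} → Ordinal.{0} → Ordinal.{0}) : Ordinal.{0} → Ordinal.{0} :=
  Ordinal.lt_wf.fix fun i IH => sSup (Set.range fun j : Iio i => step j.1 (IH j.1 j.2))

lemma recSup_eq (step : Ordinal.{0} → Ordinal.{0} → Ordinal.{0}) (i : Ordinal.{0}) :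
    recSup step i = sSup ((fun j => step j (recSup step j)) '' Iio i) := by
  conv_lhs => rw [recSup, WellFounded.fix_eq]
  rw [Set.image_eq_range]
  rfl

lemma bddAbove_step_image (step : Ordinal.{0} → Ordinal.{0} → Ordinal.{0}) (i : Ordinal.{0}) :
    BddAbove ((fun j => step j (recSup step j)) '' Iio i) :=
  Ordinal.bddAbove_of_small

variable {step : Ordinal.{0} → Ordinal.{0} → Ordinal.{0}}

lemma recSup_strictMono (hstep : ∀ j x, x < step j x) : StrictMono (recSup step) := by
  intro i i' h
  calc recSup step i < step i (recSup step i) := hstep i _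
    _ ≤ sSup ((fun j => step j (recSup step j)) '' Iio i') :=
        le_csSup (bddAbove_step_image step i') ⟨i, h, rfl⟩
    _ = recSup step i' := (recSup_eq step i').symm

lemma self_lt_add_one (b : Ordinal.{0}) : b < b + 1 := by
  rw [Ordinal.add_one_eq_succ]; exact Order.lt_succ b

lemma recSup_limit (hstep : ∀ j x, x < step j x) {i : Ordinal.{0}} (hi : Order.IsSuccLimit i) :
    recSup step i = sSup (recSup step '' Iio i) := by
  have hne : (Iio i).Nonempty := ⟨0, hi.pos⟩
  apply le_antisymm
  · rw [recSup_eq]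
    apply csSup_le (hne.image _)
    rintro x ⟨j, hj, rfl⟩
    calc step j (recSup step j) ≤ recSup step (j+1) := by
          rw [recSup_eq step (j+1)]
          exact le_csSup (bddAbove_step_image step (j+1)) ⟨j, self_lt_add_one j, rfl⟩
      _ ≤ sSup (recSup step '' Iio i) := by
          refine le_csSup Ordinal.bddAbove_of_small ⟨j+1, ?_, rfl⟩
          rw [Ordinal.add_one_eq_succ]
          exact hi.succ_lt hj
  · apply csSup_le (hne.image _)
    rintro x ⟨j, hj, rfl⟩
    exact ((recSup_strictMono hstep).monotone hj.le)

lemma recSup_isNormal (hstep : ∀ j x, x < step j x) : Order.IsNormal (recSup step) := by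
  rw [Order.isNormal_iff]
  constructor
  · exact recSup_strictMono hstep
  · intro o ho a
    rw [recSup_limit hstep ho]
    · intro h
      apply csSup_le (s := recSup step '' Iio o) ⟨recSup step 0, Set.mem_image_of_mem _ ho.pos⟩
      rintro x ⟨j, hj, rfl⟩
      exact h j hj

lemma recSup_lt (hstep : ∀ j x, x < step j x) {θ : Ordinal.{0}}
    (hpres : ∀ j x, x < θ → step j x < θ) :
    ∀ i, i.card < θ.cof → recSup step i < θ := by
  intro i
  induction i using Ordinal.induction with
  | h i IH =>
    intro hcard
    rw [recSup_eq]
    apply sSup_lt_of_scard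
    · rintro x ⟨j, hj, rfl⟩
      refine hpres j _ (IH j hj ?_)
      exact lt_of_le_of_lt (Ordinal.card_le_card hj.le) hcard
    · calc scard ((fun j => step j (recSup step j)) '' Iio i)
          ≤ scard (Iio i) := Cardinal.mk_image_le
        _ = Cardinal.lift.{1} i.card := Ordinal.mk_Iio_ordinal i
        _ < Cardinal.lift.{1} θ.cof := Cardinal.lift_lt.2 hcard

lemma recSup_acc (hstep : ∀ j x, x < step j x) {θ α : Ordinal.{0}}
    (hacc : α ∈ accSet (recSup step '' Iio θ))
    (hex : ∃ i, i < θ ∧ α ≤ recSup step i) : α ∈ recSup step '' Iio θ := by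
  classical
  have hmono := recSup_strictMono hstep
  set v := recSup step with hv
  set s : Set Ordinal.{0} := {i | α ≤ v i} with hs
  have hsne : s.Nonempty := ⟨hex.choose, hex.choose_spec.2⟩
  set i₀ := sInf s with hi₀def
  have hi₀ : α ≤ v i₀ := csInf_mem hsne
  have hi₀θ : i₀ < θ :=
    (csInf_le' (show hex.choose ∈ s from hex.choose_spec.2)).trans_lt hex.choose_spec.1
  have hlow : ∀ j, j < i₀ → v j < α := fun j hj =>
    lt_of_not_ge fun h => (csInf_le' (show j ∈ s from h)).not_gt hj
  obtain ⟨hne, hsup⟩ := hacc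
  have h0 : i₀ ≠ 0 := by
    rintro h
    obtain ⟨x, ⟨j, hjθ, rfl⟩, hxα⟩ := hne
    have h1 : v i₀ ≤ v j := by
      rw [h]
      exact hmono.monotone (zero_le (a := j))
    exact (show v j ∈ Iio α from hxα).not_ge (hi₀.trans h1)
  rcases Ordinal.zero_or_succ_or_isSuccLimit i₀ with h | ⟨j, hj⟩ | hlim
  · exact absurd h h0
  · exfalso
    have hjlt : j < i₀ := by rw [← hj]; exact Order.lt_succ j
    have hvj : v j < α := hlow j hjlt
    have hle : α ≤ v j := by
      rw [hsup]
      apply csSup_le hne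
      rintro x ⟨⟨j', hj'θ, rfl⟩, hx⟩
      have hj' : j' < i₀ := by
        by_contra hc
        exact (show v j' ∈ Iio α from hx).not_ge (hi₀.trans (hmono.monotone (not_lt.mp hc)))
      refine hmono.monotone ?_
      rw [← hj] at hj'
      exact Order.lt_succ_iff.mp hj'
    exact hle.not_gt hvj
  · have hvα : v i₀ = α := by
      apply le_antisymm _ hi₀
      rw [hv, recSup_limit hstep hlim]
      apply csSup_le (s := recSup step '' Iio i₀) ⟨recSup step 0, Set.mem_image_of_mem _ hlim.pos⟩
      rintro x ⟨j, hj, rfl⟩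
      exact (hlow j hj).le
    exact ⟨i₀, hi₀θ, hvα⟩

/-- every `δ` of cofinality `κ` has a club of order type `κ.ord` -/
lemma exists_base {κ : Cardinal.{0}} {δ : Ordinal.{0}} (hκ : κ.IsRegular) (hδ : δ.cof = κ) :
    ∃ c : Set Ordinal.{0}, IsClubIn c δ ∧ otp c = Ordinal.lift.{1} κ.ord := by
  classical
  have hκω : ℵ₀ ≤ κ := hκ.aleph0_le
  have hδlim : Order.IsSuccLimit δ := Ordinal.aleph0_le_cof.mp (by rw [hδ]; exact hκω)
  obtain ⟨f, hf⟩ := Ordinal.exists_fundamental_sequence δ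
  have hcoford : δ.cof.ord = κ.ord := by rw [hδ]
  set F : Ordinal.{0} → Ordinal.{0} := fun j => if h : j < δ.cof.ord then f j h else 0 with hF
  have hFlt : ∀ j, F j < δ := by
    intro j
    rw [hF]; dsimp only
    split
    · exact hf.lt ‹_›
    · exact hδlim.pos
  set step : Ordinal.{0} → Ordinal.{0} → Ordinal.{0} := fun j x => max (F j) x + 1 with hstepdef
  have hstep : ∀ j x, x < step j x := fun j x =>
    lt_of_le_of_lt (le_max_right _ _) (self_lt_add_one _)
  have hpres : ∀ j x, x < δ → step j x < δ := by
    intro j x hx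
    have h1 : max (F j) x < δ := max_lt (hFlt j) hx
    show max (F j) x + 1 < δ
    rw [Ordinal.add_one_eq_succ]
    exact hδlim.succ_lt h1
  set v := recSup step with hv
  have hvlt : ∀ i, i < κ.ord → v i < δ := by
    intro i hi
    refine recSup_lt hstep hpres i ?_
    rw [hδ]
    exact Cardinal.lt_ord.mp hi
  have hκlim : Order.IsSuccLimit κ.ord := Cardinal.isSuccLimit_ord hκω
  set c := v '' Iio κ.ord with hc
  have hsub : c ⊆ Iio δ := by rintro x ⟨i, hi, rfl⟩; exact hvlt i hi
  have hunb : ∀ α < δ, ∃ β ∈ c, α < β := by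
    intro α hα
    have h2 : α < Ordinal.blsub _ f := by rw [hf.blsub_eq]; exact hα
    obtain ⟨j, hj, hle⟩ := Ordinal.lt_blsub_iff.mp h2
    refine ⟨v (j+1), ⟨j+1, ?_, rfl⟩, ?_⟩
    · rw [Ordinal.add_one_eq_succ]
      exact hκlim.succ_lt (by rw [← hcoford]; exact hj)
    · have h1 : F j = f j hj := by rw [hF]; dsimp only; rw [dif_pos hj]
      calc α ≤ f j hj := hle
        _ = F j := h1.symm
        _ ≤ max (F j) (v j) := le_max_left _ _
        _ < step j (v j) := self_lt_add_one _
        _ ≤ v (j+1) := by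
            rw [hv, recSup_eq step (j+1)]
            exact le_csSup (bddAbove_step_image step (j+1)) ⟨j, self_lt_add_one j, rfl⟩
  refine ⟨c, ⟨hsub, hunb, ?_⟩, ?_⟩
  · rintro α ⟨hacc, hαδ⟩
    apply recSup_acc hstep hacc
    obtain ⟨β, hβ, h⟩ := hunb α hαδ
    obtain ⟨i, hi, rfl⟩ := hβ
    exact ⟨i, hi, h.le⟩
  · apply otp_image_Iio
    intro a _ b _ hab
    exact recSup_strictMono hstep hab

/-- inside any unbounded closed-enough `E ⊆ θ` there is `δ < θ` of cofinality `κ` in which `E`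
is unbounded. -/
lemma exists_delta {κ : Cardinal.{0}} (hκ : κ.IsRegular) {θ : Ordinal.{0}} {E : Set Ordinal.{0}}
    (hE : E ⊆ Iio θ) (hEu : ∀ α < θ, ∃ β ∈ E, α < β) (hθcof : κ < θ.cof) :
    ∃ δ, δ < θ ∧ δ.cof = κ ∧ ∀ α < δ, ∃ β ∈ E, α < β ∧ β < δ := by
  classical
  have hκω : ℵ₀ ≤ κ := hκ.aleph0_le
  set step : Ordinal.{0} → Ordinal.{0} → Ordinal.{0} :=
    fun _ x => max x (sInf (E ∩ Ioi x)) + 1 with hstepdef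
  have hstep : ∀ j x, x < step j x := fun j x =>
    lt_of_le_of_lt (le_max_left _ _) (self_lt_add_one _)
  have hθlim : Order.IsSuccLimit θ := Ordinal.aleph0_le_cof.mp (hκω.trans hθcof.le)
  have hEnext : ∀ x, x < θ →
      sInf (E ∩ Ioi x) ∈ E ∧ x < sInf (E ∩ Ioi x) ∧ sInf (E ∩ Ioi x) < θ := by
    intro x hx
    have hne : (E ∩ Ioi x).Nonempty := by
      obtain ⟨β, h1, h2⟩ := hEu x hx
      exact ⟨β, h1, h2⟩
    have hmem := csInf_mem hne
    exact ⟨hmem.1, hmem.2, hE hmem.1⟩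
  have hpres : ∀ j x, x < θ → step j x < θ := by
    intro j x hx
    have h1 : max x (sInf (E ∩ Ioi x)) < θ := max_lt hx (hEnext x hx).2.2
    show max x (sInf (E ∩ Ioi x)) + 1 < θ
    rw [Ordinal.add_one_eq_succ]
    exact hθlim.succ_lt h1
  set v := recSup step with hv
  have hκlim : Order.IsSuccLimit κ.ord := Cardinal.isSuccLimit_ord hκω
  have hvlt : ∀ i, i ≤ κ.ord → v i < θ := by
    intro i hi
    refine recSup_lt hstep hpres i ?_
    calc i.card ≤ κ.ord.card := Ordinal.card_le_card hi
      _ = κ := Cardinal.card_ord κ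
      _ < θ.cof := hθcof
  refine ⟨v κ.ord, hvlt κ.ord le_rfl, ?_, ?_⟩
  · rw [Ordinal.cof_map_of_isNormal (recSup_isNormal hstep) hκlim]
    exact hκ.cof_eq
  · intro α hα
    rw [hv, recSup_limit hstep hκlim] at hα
    obtain ⟨x, ⟨i, hi, rfl⟩, hx⟩ :=
      exists_lt_of_lt_csSup ⟨recSup step 0,
        Set.mem_image_of_mem _ (show (0:Ordinal.{0}) ∈ Iio κ.ord from hκlim.pos)⟩ hα
    have hilt : i < κ.ord := hi
    have hviθ : recSup step i < θ := hvlt i hilt.le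
    refine ⟨sInf (E ∩ Ioi (recSup step i)), (hEnext _ hviθ).1,
      hx.trans (hEnext _ hviθ).2.1, ?_⟩
    calc sInf (E ∩ Ioi (recSup step i)) ≤ max (recSup step i) (sInf (E ∩ Ioi (recSup step i))) :=
          le_max_right _ _
      _ < step i (recSup step i) := self_lt_add_one _
      _ ≤ recSup step (i+1) := by
          rw [recSup_eq step (i+1)]
          exact le_csSup (bddAbove_step_image step (i+1)) ⟨i, self_lt_add_one i, rfl⟩
      _ ≤ v κ.ord := by
          refine (recSup_strictMono hstep ?_).le
          rw [Ordinal.add_one_eq_succ]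
          exact hκlim.succ_lt hilt

/-- the "glide" of `b` along `D`: suprema of initial segments of `D` below points of `b`. -/
def glide (b D : Set Ordinal.{0}) : Set Ordinal.{0} :=
  {x | ∃ β ∈ b, (D ∩ Iio β).Nonempty ∧ x = sSup (D ∩ Iio β)}

lemma glide_subset_Iio {b D : Set Ordinal.{0}} {δ : Ordinal.{0}} (hb : b ⊆ Iio δ) :
    glide b D ⊆ Iio δ := by
  rintro x ⟨β, hβ, hne, rfl⟩
  exact lt_of_le_of_lt (csSup_le hne fun y hy => hy.2.le) (hb hβ)

lemma glide_validity {κ : Cardinal.{0}} (hκ : κ.IsRegular) {δ : Ordinal.{0}}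
    {b D : Set Ordinal.{0}} (hb : IsClubIn b δ) (hotp : otp b = Ordinal.lift.{1} κ.ord)
    (hδ : δ.cof = κ) (hu : ∀ α < δ, ∃ x ∈ glide b D, α < x) :
    IsClubIn (clo (glide b D) δ) δ ∧ otp (clo (glide b D) δ) = Ordinal.lift.{1} κ.ord := by
  classical
  set g := glide b D with hg
  have hgsub : g ⊆ Iio δ := glide_subset_Iio hb.1
  have hclub := clo_isClubIn hgsub hu
  have hκinf : ℵ₀ ≤ Cardinal.lift.{1} κ := by
    rw [← Cardinal.lift_aleph0.{1,0}]
    exact Cardinal.lift_le.2 hκ.aleph0_le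
  refine ⟨hclub, le_antisymm ?_ ?_⟩
  · apply otp_le_of_segments
    intro x hx
    have hxδ : x < δ := hclub.1 hx
    obtain ⟨x₂, hx₂g, hx₂⟩ := hu x hxδ
    obtain ⟨β₀, hβ₀b, hne₀, hx₂eq⟩ := hx₂g
    have hgx : scard (g ∩ Iio x) < Cardinal.lift.{1} κ := by
      have hsub2 : g ∩ Iio x ⊆ (fun β => sSup (D ∩ Iio β)) '' (b ∩ Iio β₀) := by
        rintro y ⟨⟨β, hβ, hneβ, rfl⟩, hy⟩
        refine ⟨β, ⟨hβ, ?_⟩, rfl⟩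
        by_contra hc
        have hle : sSup (D ∩ Iio β₀) ≤ sSup (D ∩ Iio β) :=
          csSup_le_csSup (bddAbove_inter_Iio D β) hne₀
            (Set.inter_subset_inter_right _ (Iio_subset_Iio (not_lt.mp hc)))
        rw [← hx₂eq] at hle
        exact absurd (hle.trans_lt (show sSup (D ∩ Iio β) < x from hy)) (asymm hx₂)
      calc scard (g ∩ Iio x) ≤ scard ((fun β => sSup (D ∩ Iio β)) '' (b ∩ Iio β₀)) :=
            Cardinal.mk_le_mk_of_subset hsub2
        _ ≤ scard (b ∩ Iio β₀) := Cardinal.mk_image_le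
        _ < Cardinal.lift.{1} κ := scard_segment_lt hotp hβ₀b
    -- accumulation part
    set A : Set Ordinal.{0} := (clo g δ ∩ Iio x) \ g with hA
    have hAacc : ∀ y ∈ A, y ∈ accSet g ∧ y < x ∧ y < δ := by
      rintro y ⟨⟨hyclo, hyx⟩, hyg⟩
      rcases hyclo.2 with h | h
      · exact absurd h hyg
      · exact ⟨h, hyx, hyclo.1⟩
    set φ : Ordinal.{0} → Ordinal.{0} := fun y => sInf (g ∩ Ioi y) with hφ
    have hφspec : ∀ y, y < δ → φ y ∈ g ∧ y < φ y := by
      intro y hy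
      have hne : (g ∩ Ioi y).Nonempty := by
        obtain ⟨z, hz1, hz2⟩ := hu y hy
        exact ⟨z, hz1, hz2⟩
      exact ⟨(csInf_mem hne).1, (csInf_mem hne).2⟩
    have hφlt : ∀ y y', y ∈ A → y' ∈ A → y < y' → φ y < y' := by
      intro y y' hyA hy'A hyy'
      obtain ⟨hacc', _, _⟩ := hAacc y' hy'A
      obtain ⟨_, hdens⟩ := mem_accSet_iff.mp hacc'
      obtain ⟨β, hβg, h1, h2⟩ := hdens y hyy'
      exact lt_of_le_of_lt (csInf_le' ⟨hβg, h1⟩) h2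
    set ψ : A → Option ↥(g ∩ Iio x) := fun y =>
      if h : φ y.1 < x ∧ φ y.1 ∈ g then some ⟨φ y.1, h.2, h.1⟩ else none with hψ
    have key : ∀ z z' (hz : z ∈ A) (hz' : z' ∈ A), z < z' →
        ψ ⟨z, hz⟩ ≠ ψ ⟨z', hz'⟩ := by
      intro z z' hz hz' hlt
      have h1 : φ z < z' := hφlt z z' hz hz' hlt
      have h2 : φ z < x := h1.trans (hAacc z' hz').2.1
      have hzg : φ z ∈ g := (hφspec z (hAacc z hz).2.2).1
      have h4 : z' < φ z' := (hφspec z' (hAacc z' hz').2.2).2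
      have h3 : φ z < φ z' := h1.trans h4
      rw [hψ]
      dsimp only
      rw [dif_pos (⟨h2, hzg⟩ : φ z < x ∧ φ z ∈ g)]
      split
      · intro hcon
        rw [Option.some_inj] at hcon
        exact absurd (congrArg Subtype.val hcon) h3.ne
      · exact fun hcon => Option.some_ne_none _ hcon
    have hψinj : Function.Injective ψ := by
      rintro ⟨y, hy⟩ ⟨y', hy'⟩ h
      ext
      by_contra hne
      rcases lt_or_gt_of_ne hne with hlt | hlt
      · exact key y y' hy hy' hlt h
      · exact key y' y hy' hy hlt h.symm
    have hAcard : scard A ≤ scard (g ∩ Iio x) + 1 := by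
      calc scard A ≤ #(Option ↥(g ∩ Iio x)) := Cardinal.mk_le_of_injective hψinj
        _ = scard (g ∩ Iio x) + 1 := Cardinal.mk_option
    have hsplit : clo g δ ∩ Iio x ⊆ (g ∩ Iio x) ∪ A := by
      intro y hy
      by_cases hmem : y ∈ g
      · exact Or.inl ⟨hmem, hy.2⟩
      · exact Or.inr ⟨hy, hmem⟩
    calc scard (clo g δ ∩ Iio x) ≤ scard ((g ∩ Iio x) ∪ A) := Cardinal.mk_le_mk_of_subset hsplit
      _ ≤ scard (g ∩ Iio x) + scard A := Cardinal.mk_union_le _ _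
      _ ≤ scard (g ∩ Iio x) + (scard (g ∩ Iio x) + 1) := add_le_add_right hAcard _
      _ < Cardinal.lift.{1} κ := by
          refine Cardinal.add_lt_of_lt hκinf hgx ?_
          refine Cardinal.add_lt_of_lt hκinf hgx ?_
          exact lt_of_lt_of_le Cardinal.one_lt_aleph0 hκinf
  · have h1 : Cardinal.lift.{1} κ ≤ scard (clo g δ) := by
      have h2 := lift_cof_le_scard hclub.1 hclub.2.1
      rwa [hδ] at h2
    calc Ordinal.lift.{1} κ.ord = (Cardinal.lift.{1} κ).ord := Cardinal.lift_ord κ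
      _ ≤ (scard (clo g δ)).ord := Cardinal.ord_le_ord.2 h1
      _ ≤ otp (clo g δ) := ord_scard_le_otp _

end CG

/-- Club guessing: if `κ⁺ < λ` are regular cardinals, there is a
sequence `⟨c_δ : δ < λ, cf δ = κ⟩` of clubs `c_δ ⊆ δ` of order type `κ`
guessing every club of `λ`. -/
theorem stmt_9 (κ lam : Cardinal.{0}) (hκ : κ.IsRegular) (hlam : lam.IsRegular)
    (hlt : (Order.succ κ) < lam) :
    ∃ c : Ordinal.{0} → Set Ordinal.{0},
      (∀ δ, δ < lam.ord → δ.cof = κ →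
        IsClubIn (c δ) δ ∧ otp (c δ) = Ordinal.lift.{1,0} κ.ord) ∧
      ∀ E : Set Ordinal.{0}, IsClubIn E lam.ord →
        ∃ δ, δ < lam.ord ∧ δ.cof = κ ∧ c δ ⊆ E := by
  classical
  by_contra hcon
  push_neg at hcon
  have hκω : ℵ₀ ≤ κ := hκ.aleph0_le
  have hlamcof : lam.ord.cof = lam := hlam.cof_eq
  have hκlam : κ < lam := lt_trans (Order.lt_succ κ) hlt
  have hℵlam : ℵ₀ < lam := lt_of_le_of_lt hκω hκlam
  have hlamlim : Order.IsSuccLimit lam.ord := Cardinal.isSuccLimit_ord hlam.aleph0_le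
  -- base clubs
  have hbase : ∀ δ : Ordinal.{0}, ∃ bb : Set Ordinal.{0},
      δ.cof = κ → IsClubIn bb δ ∧ otp bb = Ordinal.lift.{1} κ.ord := by
    intro δ
    by_cases h : δ.cof = κ
    · obtain ⟨bb, hbb⟩ := CG.exists_base hκ h
      exact ⟨bb, fun _ => hbb⟩
    · exact ⟨∅, fun h' => absurd h' h⟩
  choose b hb using hbase
  -- candidates
  set cand : Set Ordinal.{0} → Ordinal.{0} → Set Ordinal.{0} := fun D δ =>
    if _ : ∀ α < δ, ∃ x ∈ CG.glide (b δ) D, α < x then CG.clo (CG.glide (b δ) D) δ else b δ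
    with hcand
  have hcandA : ∀ D : Set Ordinal.{0}, ∀ δ, δ < lam.ord → δ.cof = κ →
      IsClubIn (cand D δ) δ ∧ otp (cand D δ) = Ordinal.lift.{1} κ.ord := by
    intro D δ _ hδ
    rw [hcand]; dsimp only
    split
    · exact CG.glide_validity hκ (hb δ hδ).1 (hb δ hδ).2 hδ ‹_›
    · exact hb δ hδ
  have hfail : ∀ D : Set Ordinal.{0}, ∃ E, IsClubIn E lam.ord ∧
      ∀ δ, δ < lam.ord → δ.cof = κ → ¬ cand D δ ⊆ E := fun D => hcon (cand D) (hcandA D)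
  choose F hF1 hF2 using hfail
  -- the decreasing sequence of clubs
  set Dseq : Ordinal.{0} → Set Ordinal.{0} :=
    Ordinal.lt_wf.fix (fun i IH => Iio lam.ord ∩ {x | ∀ j (h : j < i), x ∈ F (IH j h)}) with hD
  have hDeq : ∀ i, Dseq i = Iio lam.ord ∩ {x | ∀ j, j < i → x ∈ F (Dseq j)} := by
    intro i
    rw [hD]
    conv_lhs => rw [WellFounded.fix_eq]
  set istar : Ordinal.{0} := (Order.succ κ).ord with histar
  have hDclub : ∀ i, i ≤ istar → IsClubIn (Dseq i) lam.ord := by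
    intro i hi
    rw [hDeq]
    refine CG.inter_clubs ?_ ?_ (fun j _ => hF1 (Dseq j))
    · rw [hlamcof]; exact hℵlam
    · rw [hlamcof]
      refine Cardinal.lift_lt.2 ?_
      calc i.card ≤ istar.card := Ordinal.card_le_card hi
        _ = Order.succ κ := Cardinal.card_ord _
        _ < lam := hlt
  have hDanti : ∀ i j, i ≤ j → Dseq j ⊆ Dseq i := by
    intro i j hij x hx
    rw [hDeq] at hx ⊢
    exact ⟨hx.1, fun j' hj' => hx.2 j' (lt_of_lt_of_le hj' hij)⟩
  have hDstep : ∀ i j, i < j → Dseq j ⊆ F (Dseq i) := by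
    intro i j hij x hx
    rw [hDeq] at hx
    exact hx.2 i hij
  -- the special δ
  have hE := hDclub istar le_rfl
  obtain ⟨δ, hδlam, hδcof, hδunb⟩ :=
    CG.exists_delta hκ hE.1 hE.2.1 (by rw [hlamcof]; exact hκlam)
  -- glide is unbounded in δ for every i ≤ istar
  have hglideu : ∀ i, i ≤ istar → ∀ α < δ, ∃ x ∈ CG.glide (b δ) (Dseq i), α < x := by
    intro i hi α hα
    obtain ⟨d, hdE, hαd, hdδ⟩ := hδunb α hα
    obtain ⟨β, hβb, hdβ⟩ := (hb δ hδcof).1.2.1 d hdδ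
    have hdD : d ∈ Dseq i := hDanti i istar hi hdE
    refine ⟨sSup (Dseq i ∩ Iio β), ⟨β, hβb, ⟨d, hdD, hdβ⟩, rfl⟩, ?_⟩
    exact lt_of_lt_of_le hαd (le_csSup (CG.bddAbove_inter_Iio _ _) ⟨hdD, hdβ⟩)
  have hcand_eq : ∀ i, i ≤ istar →
      cand (Dseq i) δ = CG.clo (CG.glide (b δ) (Dseq i)) δ := by
    intro i hi
    rw [hcand]; dsimp only
    rw [dif_pos (hglideu i hi)]
  -- extraction of witnesses
  have hxi : ∀ i, ∃ x β : Ordinal.{0}, i < istar →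
      β ∈ b δ ∧ (Dseq i ∩ Iio β).Nonempty ∧ x = sSup (Dseq i ∩ Iio β) ∧ x ∉ F (Dseq i) := by
    intro i
    by_cases hi : i < istar
    · have hnotsub := hF2 (Dseq i) δ hδlam hδcof
      rw [hcand_eq i hi.le] at hnotsub
      have hgl : ¬ CG.glide (b δ) (Dseq i) ⊆ F (Dseq i) := by
        intro hsub
        exact hnotsub (CG.clo_subset_closed hsub hδlam.le (hF1 (Dseq i)).2.2)
      obtain ⟨x, hxg, hxF⟩ := Set.not_subset.mp hgl
      obtain ⟨β, h1, h2, h3⟩ := hxg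
      exact ⟨x, β, fun _ => ⟨h1, h2, h3, hxF⟩⟩
    · exact ⟨0, 0, fun h' => absurd h' hi⟩
  choose Xi Beta hXB using hxi
  -- pigeonhole
  have hbcard : #(↥(b δ)) = Cardinal.lift.{1} κ := by
    have h1 := Ordinal.card_type ((· < ·) : ↥(b δ) → ↥(b δ) → Prop)
    have h2 : otp (b δ) = Ordinal.lift.{1} κ.ord := (hb δ hδcof).2
    rw [otp] at h2
    rw [h2, Cardinal.lift_ord, Cardinal.card_ord] at h1
    exact h1.symm
  have hicard : #(↥(Iio istar)) = Cardinal.lift.{1} (Order.succ κ) := by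
    rw [Ordinal.mk_Iio_ordinal, histar, Cardinal.card_ord]
  have hinf : Infinite (↥(b δ)) := by
    rw [Cardinal.infinite_iff, hbcard, ← Cardinal.lift_aleph0.{1,0}]
    exact Cardinal.lift_le.2 hκω
  have hlt2 : #(↥(b δ)) < #(↥(Iio istar)) := by
    rw [hbcard, hicard]
    exact Cardinal.lift_lt.2 (Order.lt_succ κ)
  set fmap : ↥(Iio istar) → ↥(b δ) := fun i => ⟨Beta i.1, (hXB i.1 i.2).1⟩ with hfmap
  obtain ⟨a, ha⟩ := Cardinal.exists_infinite_fiber' fmap hlt2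
  set T : Set Ordinal.{0} := Subtype.val '' (fmap ⁻¹' {a}) with hT
  have hTinf : T.Infinite := by
    rw [hT]
    refine Set.Infinite.image (Set.injOn_of_injective Subtype.val_injective) ?_
    exact Set.infinite_coe_iff.mp ha
  obtain ⟨g, hgmono, hgT⟩ := CG.exists_nat_chain hTinf
  have hgprop : ∀ n, g n < istar ∧ Beta (g n) = a.1 := by
    intro n
    obtain ⟨p, hp, hpv⟩ := hgT n
    constructor
    · rw [← hpv]; exact p.2
    · have : fmap p = a := hp
      rw [← hpv]
      exact congrArg Subtype.val this
  set ξ : ℕ → Ordinal.{0} := fun n => Xi (g n) with hξ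
  have hXprop : ∀ n, ξ n = sSup (Dseq (g n) ∩ Iio a.1) ∧
      (Dseq (g n) ∩ Iio a.1).Nonempty ∧ ξ n ∉ F (Dseq (g n)) := by
    intro n
    obtain ⟨h1, h2, h3, h4⟩ := hXB (g n) (hgprop n).1
    rw [(hgprop n).2] at h2 h3
    exact ⟨h3, h2, h4⟩
  have hanti : ∀ n m, n < m → ξ m ≤ ξ n := by
    intro n m hnm
    rw [(hXprop n).1, (hXprop m).1]
    exact csSup_le_csSup (CG.bddAbove_inter_Iio _ _) (hXprop m).2.1
      (Set.inter_subset_inter_left _ (hDanti (g n) (g m) (hgmono hnm).le))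
  -- find two equal values
  have hmin := csInf_mem (Set.range_nonempty ξ)
  obtain ⟨n₀, hn₀⟩ := hmin
  have heq : ξ (n₀ + 1) = ξ n₀ := by
    refine le_antisymm (hanti n₀ (n₀+1) (Nat.lt_succ_self n₀)) ?_
    rw [hn₀]
    exact csInf_le' ⟨n₀ + 1, rfl⟩
  -- contradiction
  have hβδ : a.1 < δ := (hb δ hδcof).1.1 a.2
  have hsuplt : sSup (Dseq (g (n₀+1)) ∩ Iio a.1) < lam.ord := by
    refine lt_of_le_of_lt (csSup_le (hXprop (n₀+1)).2.1 fun y hy => hy.2.le) ?_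
    exact hβδ.trans hδlam
  have hmem : ξ (n₀+1) ∈ Dseq (g (n₀+1)) := by
    rw [(hXprop (n₀+1)).1]
    exact CG.sSup_mem_closed (hDclub (g (n₀+1)) (hgprop (n₀+1)).1.le)
      Set.inter_subset_left (hXprop (n₀+1)).2.1 hsuplt
  have hinF : ξ (n₀+1) ∈ F (Dseq (g n₀)) :=
    hDstep (g n₀) (g (n₀+1)) (hgmono (Nat.lt_succ_self n₀)) hmem
  rw [heq] at hinF
  exact (hXprop n₀).2.2 hinF
end
end
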